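/- arXiv:1301.3963 — 3 statements merged into one kernel-verified Lean document; each statement's English description precedes it below -/
import Mathlib

section
/- Fix m,n ∈ ℕ and p ∈ [1,∞). Let B = (b_{ir}) be an n×m stochastic matrix and C = (c_{ij}) ∈ M_n(ℝ) a stochastic matrix, and fix a probability vector π ∈ Δ^{n-1} such that C is reversible relative to π. Then for every metric space (X,d_X) and every z_1,…,z_m ∈ X there exist w_1,…,w_n ∈ X such that max{ Σ_{i=1}^n Σ_{r=1}^m π_i b_{ir} d_X(w_i,z_r)^p , Σ_{i=1}^n Σ_{j=1}^n π_i c_{ij} d_X(w_i,w_j)^p } ≤ 3^p Σ_{r=1}^m Σ_{s=1}^m (Bᵀ D_π C B)_{rs} d_X(z_r,z_s)^p, where D_π ∈ M_n(ℝ) is the diagonal matrix whose diagonal entries are π_1,…,π_n. -/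
open scoped BigOperators ENNReal
open scoped Classical

noncomputable section

/-- A finitely supported probability measure on `X`. -/
structure FinProb (X : Type*) where
  w : X →₀ ℝ
  nonneg : ∀ x, 0 ≤ w x
  total : w.sum (fun _ r => r) = 1

namespace FinProb

/-- The Dirac point mass at `x`. -/
def dirac {X : Type*} (x : X) : FinProb X where
  w := Finsupp.single x 1
  nonneg := fun y => by
    rw [Finsupp.single_apply]
    split <;> norm_num
  total := Finsupp.sum_single_index rfl

/-- The probability measure `∑ i, w i • δ_{Z i}` for nonnegative weights summing to 1. -/
def mix {ι X : Type*} [Fintype ι] (w : ι → ℝ) (Z : ι → X)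
    (hw : ∀ i, 0 ≤ w i) (h1 : ∑ i, w i = 1) : FinProb X where
  w := ∑ i, Finsupp.single (Z i) (w i)
  nonneg := fun x => by
    rw [Finset.sum_apply']
    refine Finset.sum_nonneg fun i _ => ?_
    rw [Finsupp.single_apply]
    split
    · exact hw i
    · exact le_rfl
  total := by
    rw [← Finsupp.sum_finset_sum_index (fun _ => rfl) (fun _ _ _ => rfl)]
    have h : ∀ i ∈ (Finset.univ : Finset ι),
        (Finsupp.single (Z i) (w i)).sum (fun _ r => r) = w i :=
      fun i _ => Finsupp.sum_single_index rfl
    rw [Finset.sum_congr rfl h]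
    exact h1

/-- `mix` with normalization of the weights. -/
def mixN {ι X : Type*} [Fintype ι] (w : ι → ℝ) (Z : ι → X)
    (hw : ∀ i, 0 ≤ w i) (hpos : 0 < ∑ i, w i) : FinProb X :=
  mix (fun i => w i / ∑ j, w j) Z
    (fun i => div_nonneg (hw i) hpos.le)
    (by rw [← Finset.sum_div, div_self (ne_of_gt hpos)])

/-- Integral of `f : X → ℝ` against `μ`. -/
def exp {X : Type*} (μ : FinProb X) (f : X → ℝ) : ℝ :=
  μ.w.sum fun x r => r * f x

end FinProb

/-- `π` is a coupling of `μ` and `ν`. -/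
def IsCoupling {X : Type*} (π : FinProb (X × X)) (μ ν : FinProb X) : Prop :=
  (∀ x : X, (π.w.sum fun q r => if q.1 = x then r else 0) = μ.w x) ∧
  (∀ y : X, (π.w.sum fun q r => if q.2 = y then r else 0) = ν.w y)

/-- The Wasserstein `p` distance between finitely supported probability measures. -/
def wassersteinDist {X : Type*} [MetricSpace X] (p : ℝ) (μ ν : FinProb X) : ℝ :=
  sInf {c : ℝ | ∃ π : FinProb (X × X), IsCoupling π μ ν ∧
    c = (π.exp fun q => dist q.1 q.2 ^ p) ^ p⁻¹}

/-- A barycenter map sends Dirac masses to their base points. -/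
def IsBarycenterMap {X : Type*} (bary : FinProb X → X) : Prop :=
  ∀ x : X, bary (FinProb.dirac x) = x

/-- `X` is `W_p` barycentric with constant `Γ` via the barycenter map `bary`. -/
def IsWBarycentric {X : Type*} [MetricSpace X] (p Γ : ℝ) (bary : FinProb X → X) : Prop :=
  IsBarycenterMap bary ∧
    ∀ μ ν : FinProb X, dist (bary μ) (bary ν) ≤ Γ * wassersteinDist p μ ν

/-- `X` is `p`-barycentric with constant `K` via the map `bary`. -/
def IsPBarycentric {X : Type*} [MetricSpace X] (p K : ℝ) (bary : FinProb X → X) : Prop :=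
  ∀ (x : X) (μ : FinProb X),
    dist x (bary μ) ^ p + K ^ (-p) * (μ.exp fun y => dist (bary μ) y ^ p)
      ≤ μ.exp fun y => dist x y ^ p

/-- A (possibly rectangular) matrix is stochastic if it has nonnegative entries and
each row sums to `1`. -/
def IsStochastic {n m : ℕ} (A : Matrix (Fin n) (Fin m) ℝ) : Prop :=
  (∀ i j, 0 ≤ A i j) ∧ ∀ i, ∑ j, A i j = 1

/-- `A` is reversible relative to the probability vector `π`. -/
def IsReversible {n : ℕ} (A : Matrix (Fin n) (Fin n) ℝ) (π : Fin n → ℝ) : Prop :=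
  ∀ i j, π i * A i j = π j * A j i

/-- `π` is a probability vector. -/
def IsProbVec {n : ℕ} (π : Fin n → ℝ) : Prop :=
  (∀ i, 0 ≤ π i) ∧ ∑ i, π i = 1

/-- The Cesàro average `𝒜_t(A) = (1/t) ∑_{s=1}^t A^s`. -/
def cesaro {n : ℕ} (A : Matrix (Fin n) (Fin n) ℝ) (t : ℕ) : Matrix (Fin n) (Fin n) ℝ :=
  (t : ℝ)⁻¹ • ∑ s ∈ Finset.Icc 1 t, A ^ s

/-- `X` has Markov type `p` with constant `M`. -/
def HasMarkovType (X : Type*) [MetricSpace X] (p M : ℝ) : Prop :=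
  ∀ (n t : ℕ), 0 < n → 0 < t → ∀ (π : Fin n → ℝ) (A : Matrix (Fin n) (Fin n) ℝ),
    IsProbVec π → IsStochastic A → IsReversible A π → ∀ x : Fin n → X,
      ∑ i, ∑ j, π i * (A ^ t) i j * dist (x i) (x j) ^ p ≤
        M ^ p * t * ∑ i, ∑ j, π i * A i j * dist (x i) (x j) ^ p

/-- `X` has metric Markov cotype `p` with constant `N`. -/
def HasMetricMarkovCotype (X : Type*) [MetricSpace X] (p N : ℝ) : Prop :=
  ∀ (n t : ℕ), 0 < n → 0 < t → ∀ (π : Fin n → ℝ) (A : Matrix (Fin n) (Fin n) ℝ),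
    IsProbVec π → IsStochastic A → IsReversible A π → ∀ x : Fin n → X,
      ∃ y : Fin n → X,
        (∑ i, π i * dist (x i) (y i) ^ p) +
          t * ∑ i, ∑ j, π i * A i j * dist (y i) (y j) ^ p ≤
        N ^ p * ∑ i, ∑ j, π i * cesaro A t i j * dist (x i) (x j) ^ p

/-- The Markov type `p` constant `M_p(X)`. -/
def markovTypeConst (X : Type*) [MetricSpace X] (p : ℝ) : ℝ :=
  sInf {M : ℝ | 0 < M ∧ HasMarkovType X p M}

/-- The metric Markov cotype `p` constant `N_p(X)`. -/
def markovCotypeConst (X : Type*) [MetricSpace X] (p : ℝ) : ℝ :=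
  sInf {N : ℝ | 0 < N ∧ HasMetricMarkovCotype X p N}

/-- The nonlinear spectral gap quantity `γ₊(A, d_X^p)`. -/
def gammaPlus (X : Type*) [MetricSpace X] {n : ℕ} (A : Matrix (Fin n) (Fin n) ℝ)
    (p : ℝ) : ℝ≥0∞ :=
  sInf {g : ℝ≥0∞ | ∀ x y : Fin n → X,
    ENNReal.ofReal (((n : ℝ) ^ 2)⁻¹ * ∑ i, ∑ j, dist (x i) (y j) ^ p) ≤
      (g / (n : ℝ≥0∞)) * ENNReal.ofReal (∑ i, ∑ j, A i j * dist (x i) (y j) ^ p)}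

/-- The metric of `L_p^n(X)`. -/
def dLpn {X : Type*} [MetricSpace X] (p : ℝ) {n : ℕ} (f g : Fin n → X) : ℝ :=
  ((n : ℝ)⁻¹ * ∑ i, dist (f i) (g i) ^ p) ^ p⁻¹

/-- The barycenter `B(f) = B((1/n) ∑ δ_{f(i)})` of `f : Fin n → X`. -/
def baryFun {X : Type*} [MetricSpace X] (bary : FinProb X → X) {n : ℕ} (hn : 0 < n)
    (f : Fin n → X) : X :=
  bary (FinProb.mixN (fun _ : Fin n => 1) f (fun _ => zero_le_one)
    (by
      simp only [Finset.sum_const, Finset.card_univ, Fintype.card_fin, nsmul_eq_mul, mul_one]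
      exact_mod_cast hn))

/-- The nonlinear action `(A ⊗ I_X^n)(f)(i) = B(∑_j a_{ij} δ_{f(j)})`. -/
def matAct {X : Type*} [MetricSpace X] (bary : FinProb X → X) {n : ℕ}
    (A : Matrix (Fin n) (Fin n) ℝ) (hA : IsStochastic A) (f : Fin n → X) : Fin n → X :=
  fun i => bary (FinProb.mix (fun j => A i j) f (fun j => hA.1 i j) (hA.2 i))

/-- The quantity `λ_p(T)`. -/
def lambdaP {X : Type*} [MetricSpace X] (p : ℝ) {n : ℕ} (hn : 0 < n)
    (bary : FinProb X → X) (T : (Fin n → X) → (Fin n → X)) : ℝ≥0∞ :=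
  sInf {l : ℝ≥0∞ | ∀ f : Fin n → X,
    ENNReal.ofReal (dLpn p (T f) (fun _ => baryFun bary hn (T f))) ≤
      l * ENNReal.ofReal (dLpn p f (fun _ => baryFun bary hn f))}

/-- A finite σ-algebra on a finite set `Ω`, described by its atoms. -/
structure FinPartition (Ω : Type*) [Fintype Ω] where
  atom : Ω → Finset Ω
  mem_atom : ∀ ω, ω ∈ atom ω
  atom_eq : ∀ ω ω', ω' ∈ atom ω → atom ω' = atom ω

/-- The conditional barycenter `B(Z | F)`. -/
def condBary {Ω X : Type*} [Fintype Ω] (bary : FinProb X → X)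
    (μ : Ω → ℝ) (hμ : ∀ ω, 0 < μ ω) (F : FinPartition Ω) (Z : Ω → X) : Ω → X :=
  fun ω => bary (FinProb.mixN (fun a : {a // a ∈ F.atom ω} => μ a) (fun a => Z a)
    (fun a => (hμ a).le)
    (Finset.sum_pos (fun a _ => hμ a) ⟨⟨ω, F.mem_atom ω⟩, Finset.mem_univ _⟩))


lemma add3_rpow_le (p : ℝ) (hp : 1 ≤ p) {a b c : ℝ} (ha : 0 ≤ a) (hb : 0 ≤ b) (hc : 0 ≤ c) :
    (a + b + c) ^ p ≤ 3 ^ (p - 1) * (a ^ p + b ^ p + c ^ p) := by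
  have h3 : (0:ℝ) < 3 := by norm_num
  have key := Real.rpow_arith_mean_le_arith_mean_rpow Finset.univ
    (fun _ : Fin 3 => (3:ℝ)⁻¹) ![a, b, c] (fun _ _ => by norm_num)
    (by norm_num [Fin.sum_univ_three])
    (fun i _ => by fin_cases i <;> simpa) hp
  simp only [Fin.sum_univ_three, Matrix.cons_val_zero, Matrix.cons_val_one, Matrix.head_cons,
    Matrix.cons_val_two, Matrix.tail_cons] at key
  have habc : (3:ℝ)⁻¹ * a + 3⁻¹ * b + 3⁻¹ * c = 3⁻¹ * (a + b + c) := by ring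
  rw [habc, Real.mul_rpow (by norm_num) (by positivity), Real.inv_rpow h3.le] at key
  have h3p : (0:ℝ) < 3 ^ p := Real.rpow_pos_of_pos h3 p
  have h2 := mul_le_mul_of_nonneg_left key h3p.le
  rw [← mul_assoc, mul_inv_cancel₀ h3p.ne', one_mul] at h2
  calc (a + b + c) ^ p ≤ 3 ^ p * (3⁻¹ * a ^ p + 3⁻¹ * b ^ p + 3⁻¹ * c ^ p) := h2
    _ = 3 ^ (p - 1) * (a ^ p + b ^ p + c ^ p) := by
        rw [Real.rpow_sub h3, Real.rpow_one]; ring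

lemma sum4_swap {α β γ δ : Type*} [Fintype α] [Fintype β] [Fintype γ] [Fintype δ]
    (f : α → β → γ → δ → ℝ) :
    ∑ a, ∑ b, ∑ c, ∑ d, f a b c d = ∑ c, ∑ d, ∑ a, ∑ b, f a b c d := by
  have h : ∑ x : α × β, ∑ y : γ × δ, f x.1 x.2 y.1 y.2
      = ∑ y : γ × δ, ∑ x : α × β, f x.1 x.2 y.1 y.2 := Finset.sum_comm
  simpa [Fintype.sum_prod_type] using h

theorem statement16 (m n : ℕ) (p : ℝ) (hp : 1 ≤ p) (hm : 0 < m) (hn : 0 < n)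
    (B : Matrix (Fin n) (Fin m) ℝ) (C : Matrix (Fin n) (Fin n) ℝ)
    (hB : IsStochastic B) (hC : IsStochastic C)
    (π : Fin n → ℝ) (hπ : IsProbVec π) (hrev : IsReversible C π)
    (X : Type*) [MetricSpace X] (z : Fin m → X) :
    ∃ w : Fin n → X,
      max (∑ i, ∑ r, π i * B i r * dist (w i) (z r) ^ p)
          (∑ i, ∑ j, π i * C i j * dist (w i) (w j) ^ p) ≤
        (3 : ℝ) ^ p *
          ∑ r, ∑ s, (B.transpose * Matrix.diagonal π * C * B) r s * dist (z r) (z s) ^ p := by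
  haveI : Nonempty (Fin m) := ⟨⟨0, hm⟩⟩
  have hppos : 0 < p := lt_of_lt_of_le one_pos hp
  set g : Fin n → Fin m → ℝ := fun i r => ∑ s, B i s * dist (z r) (z s) ^ p with hg
  have hex : ∀ i : Fin n, ∃ r : Fin m, ∀ r', g i r ≤ g i r' := by
    intro i
    obtain ⟨r, -, hr⟩ := Finset.exists_min_image Finset.univ (g i) Finset.univ_nonempty
    exact ⟨r, fun r' => hr r' (Finset.mem_univ _)⟩
  choose ρ hρ using hex
  refine ⟨fun i => z (ρ i), ?_⟩
  set T : ℝ := ∑ i, ∑ j, ∑ r, ∑ s, π i * B i r * C i j * B j s * dist (z r) (z s) ^ p with hT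
  have hd : ∀ (x y : X), (0:ℝ) ≤ dist x y ^ p := fun x y => Real.rpow_nonneg dist_nonneg p
  -- RHS equals 3^p * T
  have hRHS : ∑ r, ∑ s, (B.transpose * Matrix.diagonal π * C * B) r s * dist (z r) (z s) ^ p
      = T := by
    have : ∀ r s, (B.transpose * Matrix.diagonal π * C * B) r s
        = ∑ j, ∑ i, π i * B i r * C i j * B j s := by
      intro r s
      rw [Matrix.mul_apply]
      refine Finset.sum_congr rfl fun j _ => ?_
      rw [Matrix.mul_apply, Finset.sum_mul]
      refine Finset.sum_congr rfl fun i _ => ?_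
      rw [Matrix.mul_diagonal, Matrix.transpose_apply]
      ring
    simp only [this, Finset.sum_mul]
    rw [sum4_swap (fun r s j i => (π i * B i r * C i j * B j s) * dist (z r) (z s) ^ p)]
    rw [Finset.sum_comm]
  -- nonnegativity of T
  have hT0 : 0 ≤ T := by
    refine Finset.sum_nonneg fun i _ => Finset.sum_nonneg fun j _ =>
      Finset.sum_nonneg fun r _ => Finset.sum_nonneg fun s _ => ?_
    have := hπ.1 i
    have := hB.1 i r
    have := hC.1 i j
    have := hB.1 j s
    have := hd (z r) (z s)
    positivity
  have hg0 : ∀ i r, 0 ≤ g i r := fun i r =>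
    Finset.sum_nonneg fun s _ => mul_nonneg (hB.1 i s) (hd _ _)
  -- column sums of D_π C
  have hcol : ∀ j, ∑ i, π i * C i j = π j := by
    intro j
    calc ∑ i, π i * C i j = ∑ i, π j * C j i := Finset.sum_congr rfl fun i _ => hrev i j
      _ = π j * ∑ i, C j i := by rw [Finset.mul_sum]
      _ = π j := by rw [hC.2 j, mul_one]
  -- key lemma: ∑ i, π i * g i (ρ i) ≤ T
  have lemA : ∑ i, π i * g i (ρ i) ≤ T := by
    have step1 : ∀ i, g i (ρ i) ≤ ∑ j, C i j * ∑ s, B j s * g i s := by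
      intro i
      have h1 : ∀ j, C i j * g i (ρ i) ≤ C i j * ∑ s, B j s * g i s := by
        intro j
        refine mul_le_mul_of_nonneg_left ?_ (hC.1 i j)
        calc g i (ρ i) = ∑ s, B j s * g i (ρ i) := by
              rw [← Finset.sum_mul, hB.2 j, one_mul]
          _ ≤ ∑ s, B j s * g i s := Finset.sum_le_sum fun s _ =>
              mul_le_mul_of_nonneg_left (hρ i s) (hB.1 j s)
      calc g i (ρ i) = ∑ j, C i j * g i (ρ i) := by rw [← Finset.sum_mul, hC.2 i, one_mul]
        _ ≤ _ := Finset.sum_le_sum fun j _ => h1 j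
    calc ∑ i, π i * g i (ρ i) ≤ ∑ i, π i * ∑ j, C i j * ∑ s, B j s * g i s :=
        Finset.sum_le_sum fun i _ => mul_le_mul_of_nonneg_left (step1 i) (hπ.1 i)
      _ = T := by
        simp only [hg, Finset.mul_sum]
        refine Finset.sum_congr rfl fun i _ => Finset.sum_congr rfl fun j _ => ?_
        rw [Finset.sum_comm]
        refine Finset.sum_congr rfl fun r _ => Finset.sum_congr rfl fun s _ => ?_
        rw [dist_comm (z s) (z r)]
        ring
  -- first term
  have hterm1 : ∑ i, ∑ r, π i * B i r * dist (z (ρ i)) (z r) ^ p = ∑ i, π i * g i (ρ i) := by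
    refine Finset.sum_congr rfl fun i _ => ?_
    rw [hg, Finset.mul_sum]
    exact Finset.sum_congr rfl fun r _ => by ring
  -- second term
  have hA3 : ∑ j, π j * g j (ρ j) ≤ T := lemA
  have hmid : ∑ i, ∑ j, π i * C i j * (∑ r, ∑ s, B i r * B j s * dist (z r) (z s) ^ p) = T := by
    simp only [Finset.mul_sum]
    refine Finset.sum_congr rfl fun i _ => Finset.sum_congr rfl fun j _ =>
      Finset.sum_congr rfl fun r _ => Finset.sum_congr rfl fun s _ => by ring
  have hpt : ∀ i j, dist (z (ρ i)) (z (ρ j)) ^ p ≤ 3 ^ (p - 1) *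
      (g i (ρ i) + (∑ r, ∑ s, B i r * B j s * dist (z r) (z s) ^ p) + g j (ρ j)) := by
    intro i j
    have key : ∀ r s, dist (z (ρ i)) (z (ρ j)) ^ p ≤ 3 ^ (p - 1) *
        (dist (z (ρ i)) (z r) ^ p + dist (z r) (z s) ^ p + dist (z s) (z (ρ j)) ^ p) := by
      intro r s
      have htri : dist (z (ρ i)) (z (ρ j)) ≤
          dist (z (ρ i)) (z r) + dist (z r) (z s) + dist (z s) (z (ρ j)) := by
        calc dist (z (ρ i)) (z (ρ j)) ≤ dist (z (ρ i)) (z r) + dist (z r) (z (ρ j)) :=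
            dist_triangle _ _ _
          _ ≤ dist (z (ρ i)) (z r) + (dist (z r) (z s) + dist (z s) (z (ρ j))) := by
              gcongr; exact dist_triangle _ _ _
          _ = _ := by ring
      calc dist (z (ρ i)) (z (ρ j)) ^ p
          ≤ (dist (z (ρ i)) (z r) + dist (z r) (z s) + dist (z s) (z (ρ j))) ^ p :=
            Real.rpow_le_rpow dist_nonneg htri hppos.le
        _ ≤ _ := add3_rpow_le p hp dist_nonneg dist_nonneg dist_nonneg
    have collapse : ∀ K : ℝ, ∑ r, ∑ s, B i r * B j s * K = K := by
      intro K
      have h1 : ∀ r, ∑ s, B i r * B j s * K = B i r * K := by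
        intro r
        calc ∑ s, B i r * B j s * K = ∑ s, B j s * (B i r * K) :=
            Finset.sum_congr rfl fun s _ => by ring
          _ = B i r * K := by rw [← Finset.sum_mul, hB.2 j, one_mul]
      simp only [h1]
      rw [← Finset.sum_mul, hB.2 i, one_mul]
    calc dist (z (ρ i)) (z (ρ j)) ^ p
        = ∑ r, ∑ s, B i r * B j s * dist (z (ρ i)) (z (ρ j)) ^ p := (collapse _).symm
      _ ≤ ∑ r, ∑ s, B i r * B j s * (3 ^ (p - 1) *
          (dist (z (ρ i)) (z r) ^ p + dist (z r) (z s) ^ p + dist (z s) (z (ρ j)) ^ p)) := by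
          refine Finset.sum_le_sum fun r _ => Finset.sum_le_sum fun s _ => ?_
          exact mul_le_mul_of_nonneg_left (key r s) (mul_nonneg (hB.1 i r) (hB.1 j s))
      _ = 3 ^ (p - 1) *
          (g i (ρ i) + (∑ r, ∑ s, B i r * B j s * dist (z r) (z s) ^ p) + g j (ρ j)) := by
          have expand : ∀ r s, B i r * B j s * (3 ^ (p - 1) *
              (dist (z (ρ i)) (z r) ^ p + dist (z r) (z s) ^ p + dist (z s) (z (ρ j)) ^ p))
            = 3 ^ (p - 1) * (B i r * B j s * dist (z (ρ i)) (z r) ^ p)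
              + 3 ^ (p - 1) * (B i r * B j s * dist (z r) (z s) ^ p)
              + 3 ^ (p - 1) * (B i r * B j s * dist (z s) (z (ρ j)) ^ p) := fun r s => by ring
          have c1 : ∑ r, ∑ s, B i r * B j s * dist (z (ρ i)) (z r) ^ p = g i (ρ i) := by
            have h1 : ∀ r, ∑ s, B i r * B j s * dist (z (ρ i)) (z r) ^ p
                = B i r * dist (z (ρ i)) (z r) ^ p := by
              intro r
              calc ∑ s, B i r * B j s * dist (z (ρ i)) (z r) ^ p
                  = ∑ s, B j s * (B i r * dist (z (ρ i)) (z r) ^ p) :=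
                    Finset.sum_congr rfl fun s _ => by ring
                _ = _ := by rw [← Finset.sum_mul, hB.2 j, one_mul]
            simp only [h1]
            rfl
          have c3 : ∑ r, ∑ s, B i r * B j s * dist (z s) (z (ρ j)) ^ p = g j (ρ j) := by
            have h1 : ∀ r, ∑ s, B i r * B j s * dist (z s) (z (ρ j)) ^ p
                = B i r * ∑ s, B j s * dist (z (ρ j)) (z s) ^ p := by
              intro r
              rw [Finset.mul_sum]
              exact Finset.sum_congr rfl fun s _ => by rw [dist_comm (z s) (z (ρ j))]; ring
            simp only [h1]
            rw [← Finset.sum_mul, hB.2 i, one_mul]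
          rw [show (3:ℝ) ^ (p - 1) *
              (g i (ρ i) + (∑ r, ∑ s, B i r * B j s * dist (z r) (z s) ^ p) + g j (ρ j))
            = 3 ^ (p - 1) * (∑ r, ∑ s, B i r * B j s * dist (z (ρ i)) (z r) ^ p)
              + 3 ^ (p - 1) * (∑ r, ∑ s, B i r * B j s * dist (z r) (z s) ^ p)
              + 3 ^ (p - 1) * (∑ r, ∑ s, B i r * B j s * dist (z s) (z (ρ j)) ^ p) by
              rw [c1, c3]; ring]
          simp only [expand, Finset.sum_add_distrib, Finset.mul_sum]
  have hterm2 : ∑ i, ∑ j, π i * C i j * dist (z (ρ i)) (z (ρ j)) ^ p ≤ 3 ^ p * T := by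
    have step : ∑ i, ∑ j, π i * C i j * dist (z (ρ i)) (z (ρ j)) ^ p
        ≤ ∑ i, ∑ j, π i * C i j * (3 ^ (p - 1) *
          (g i (ρ i) + (∑ r, ∑ s, B i r * B j s * dist (z r) (z s) ^ p) + g j (ρ j))) := by
      refine Finset.sum_le_sum fun i _ => Finset.sum_le_sum fun j _ => ?_
      exact mul_le_mul_of_nonneg_left (hpt i j) (mul_nonneg (hπ.1 i) (hC.1 i j))
    have split : ∑ i, ∑ j, π i * C i j * (3 ^ (p - 1) *
          (g i (ρ i) + (∑ r, ∑ s, B i r * B j s * dist (z r) (z s) ^ p) + g j (ρ j)))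
        = 3 ^ (p - 1) * ((∑ i, ∑ j, π i * C i j * g i (ρ i))
          + (∑ i, ∑ j, π i * C i j * (∑ r, ∑ s, B i r * B j s * dist (z r) (z s) ^ p))
          + (∑ i, ∑ j, π i * C i j * g j (ρ j))) := by
      have e : ∀ i j, π i * C i j * ((3:ℝ) ^ (p - 1) *
            (g i (ρ i) + (∑ r, ∑ s, B i r * B j s * dist (z r) (z s) ^ p) + g j (ρ j)))
          = 3 ^ (p - 1) * (π i * C i j * g i (ρ i))
            + 3 ^ (p - 1) * (π i * C i j * (∑ r, ∑ s, B i r * B j s * dist (z r) (z s) ^ p))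
            + 3 ^ (p - 1) * (π i * C i j * g j (ρ j)) := fun i j => by ring
      simp only [e, Finset.sum_add_distrib, ← Finset.mul_sum]
      ring
    have hA1 : ∑ i, ∑ j, π i * C i j * g i (ρ i) = ∑ i, π i * g i (ρ i) := by
      refine Finset.sum_congr rfl fun i _ => ?_
      calc ∑ j, π i * C i j * g i (ρ i) = ∑ j, C i j * (π i * g i (ρ i)) :=
          Finset.sum_congr rfl fun j _ => by ring
        _ = π i * g i (ρ i) := by rw [← Finset.sum_mul, hC.2 i, one_mul]
    have hA3' : ∑ i, ∑ j, π i * C i j * g j (ρ j) = ∑ j, π j * g j (ρ j) := by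
      rw [Finset.sum_comm]
      refine Finset.sum_congr rfl fun j _ => ?_
      calc ∑ i, π i * C i j * g j (ρ j) = (∑ i, π i * C i j) * g j (ρ j) := by
            rw [Finset.sum_mul]
        _ = π j * g j (ρ j) := by rw [hcol j]
    calc ∑ i, ∑ j, π i * C i j * dist (z (ρ i)) (z (ρ j)) ^ p
        ≤ 3 ^ (p - 1) * ((∑ i, ∑ j, π i * C i j * g i (ρ i))
          + (∑ i, ∑ j, π i * C i j * (∑ r, ∑ s, B i r * B j s * dist (z r) (z s) ^ p))
          + (∑ i, ∑ j, π i * C i j * g j (ρ j))) := by rw [← split]; exact step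
      _ ≤ 3 ^ (p - 1) * (T + T + T) := by
          have h1 : (0:ℝ) ≤ 3 ^ (p - 1) := (Real.rpow_pos_of_pos (by norm_num) _).le
          refine mul_le_mul_of_nonneg_left ?_ h1
          rw [hA1, hA3', hmid]
          exact add_le_add (add_le_add lemA le_rfl) hA3
      _ = 3 ^ p * T := by
          rw [Real.rpow_sub (by norm_num : (0:ℝ) < 3), Real.rpow_one]; ring
  rw [hRHS]
  refine max_le ?_ hterm2
  rw [hterm1]
  have h3p1 : (1:ℝ) ≤ 3 ^ p := by
    have h := Real.rpow_le_rpow_of_exponent_le (by norm_num : (1:ℝ) ≤ 3) hppos.le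
    simpa using h
  calc ∑ i, π i * g i (ρ i) ≤ T := lemA
    _ = 1 * T := (one_mul T).symm
    _ ≤ 3 ^ p * T := mul_le_mul_of_nonneg_right h3p1 hT0


end
end

section
/- Dual extension criterion: Fix p, Λ, Γ ∈ [1,∞), an integer n, and ε ∈ (0,1). Suppose (X,d_X) and (Y,d_Y) are metric spaces with (Y,d_Y) being W_p barycentric with constant Γ. Fix Z ⊆ X, a Lipschitz function f : Z → Y, and distinct x_1,…,x_n ∈ X. Suppose that for every symmetric n×n real matrix H = (h_{ij}) with nonnegative entries there exists Φ^H : {x_1,…,x_n} → Y with Φ^H = f on {x_1,…,x_n} ∩ Z such that Σ_{i,j} h_{ij} d_Y(Φ^H(x_i),Φ^H(x_j))^p ≤ Λ^p ||f||_Lip^p Σ_{i,j} h_{ij} d_X(x_i,x_j)^p. Then there exists F : {x_1,…,x_n} → Y with F = f on {x_1,…,x_n} ∩ Z and Lipschitz constant ||F||_Lip ≤ (1+ε)·Γ·Λ·||f||_Lip. -/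
open scoped BigOperators ENNReal
open scoped Classical

noncomputable section

section helpers

lemma FinProb.ext' {X : Type*} {a b : FinProb X} (h : a.w = b.w) : a = b := by
  cases a; cases b; simpa using h

lemma sum_single_finsupp_sum {ι X : Type*} [Fintype ι] (q : ι → X) (w : ι → ℝ)
    (g : X → ℝ → ℝ) (h0 : ∀ a, g a 0 = 0) (hadd : ∀ a b c, g a (b + c) = g a b + g a c) :
    (∑ i, Finsupp.single (q i) (w i)).sum g = ∑ i, g (q i) (w i) := by
  rw [← Finsupp.sum_finset_sum_index h0 hadd]
  exact Finset.sum_congr rfl fun i _ => Finsupp.sum_single_index (h0 _)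

lemma FinProb.mix_w_eq {ι X : Type*} [Fintype ι] (w : ι → ℝ) (Zf : ι → X)
    (hw : ∀ i, 0 ≤ w i) (h1 : ∑ i, w i = 1) :
    (FinProb.mix w Zf hw h1).w = ∑ i, Finsupp.single (Zf i) (w i) := rfl

lemma FinProb.exp_mix {ι X : Type*} [Fintype ι] (w : ι → ℝ) (Zf : ι → X)
    (hw : ∀ i, 0 ≤ w i) (h1 : ∑ i, w i = 1) (g : X → ℝ) :
    (FinProb.mix w Zf hw h1).exp g = ∑ i, w i * g (Zf i) := by
  unfold FinProb.exp
  rw [FinProb.mix_w_eq]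
  exact sum_single_finsupp_sum Zf w (fun x r => r * g x) (fun a => zero_mul _)
    (fun a b c => add_mul _ _ _)

lemma FinProb.mix_const_eq_dirac {ι X : Type*} [Fintype ι] (w : ι → ℝ) (Zf : ι → X)
    (hw : ∀ i, 0 ≤ w i) (h1 : ∑ i, w i = 1) (y : X) (hZ : ∀ i, Zf i = y) :
    FinProb.mix w Zf hw h1 = FinProb.dirac y := by
  apply FinProb.ext'
  show (∑ i, Finsupp.single (Zf i) (w i)) = Finsupp.single y 1
  have : ∀ i : ι, Finsupp.single (Zf i) (w i) = Finsupp.singleAddHom y (w i) := by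
    intro i; rw [hZ i]; rfl
  rw [Finset.sum_congr rfl (fun i _ => this i), ← map_sum, h1]; rfl

lemma wasserstein_mix_le {Y : Type*} [MetricSpace Y] (p : ℝ) (hp : 1 ≤ p)
    {ι : Type*} [Fintype ι] (w : ι → ℝ) (hw : ∀ i, 0 ≤ w i) (h1 : ∑ i, w i = 1)
    (a b : ι → Y) :
    wassersteinDist p (FinProb.mix w a hw h1) (FinProb.mix w b hw h1) ≤
      (∑ i, w i * dist (a i) (b i) ^ p) ^ p⁻¹ := by
  apply csInf_le
  · refine ⟨0, fun c hc => ?_⟩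
    obtain ⟨π, -, rfl⟩ := hc
    apply Real.rpow_nonneg
    unfold FinProb.exp Finsupp.sum
    exact Finset.sum_nonneg fun q _ =>
      mul_nonneg (π.nonneg q) (Real.rpow_nonneg dist_nonneg p)
  · refine ⟨FinProb.mix w (fun i => (a i, b i)) hw h1, ⟨?_, ?_⟩, ?_⟩
    · intro t
      rw [FinProb.mix_w_eq, sum_single_finsupp_sum _ _ _
        (fun q => by simp) (fun q r s => by split <;> simp)]
      rw [FinProb.mix_w_eq, Finset.sum_apply']
      refine Finset.sum_congr rfl fun i _ => ?_
      rw [Finsupp.single_apply]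
    · intro t
      rw [FinProb.mix_w_eq, sum_single_finsupp_sum _ _ _
        (fun q => by simp) (fun q r s => by split <;> simp)]
      rw [FinProb.mix_w_eq, Finset.sum_apply']
      refine Finset.sum_congr rfl fun i _ => ?_
      rw [Finsupp.single_apply]
    · rw [FinProb.exp_mix]

end helpers

theorem statement17 (p Λ Γ : ℝ) (hp : 1 ≤ p) (hΛ : 1 ≤ Λ) (hΓ : 1 ≤ Γ)
    (n : ℕ) (hn : 0 < n) (ε : ℝ) (hε0 : 0 < ε) (hε1 : ε < 1)
    (X : Type*) [MetricSpace X] (Y : Type*) [MetricSpace Y]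
    (bary : FinProb Y → Y) (hW : IsWBarycentric p Γ bary)
    (Z : Set X) (f : Z → Y) (Lf : ℝ) (hLf0 : 0 ≤ Lf)
    (hf : ∀ u v : Z, dist (f u) (f v) ≤ Lf * dist (u : X) (v : X))
    (x : Fin n → X) (hx : Function.Injective x)
    (hH : ∀ H : Matrix (Fin n) (Fin n) ℝ, H.IsSymm → (∀ i j, 0 ≤ H i j) →
      ∃ Φ : Fin n → Y, (∀ (i : Fin n) (h : x i ∈ Z), Φ i = f ⟨x i, h⟩) ∧
        ∑ i, ∑ j, H i j * dist (Φ i) (Φ j) ^ p ≤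
          Λ ^ p * Lf ^ p * ∑ i, ∑ j, H i j * dist (x i) (x j) ^ p) :
    ∃ F : Fin n → Y, (∀ (i : Fin n) (h : x i ∈ Z), F i = f ⟨x i, h⟩) ∧
      ∀ i j, dist (F i) (F j) ≤ (1 + ε) * Γ * Λ * Lf * dist (x i) (x j) := by
  have hp0 : p ≠ 0 := by positivity
  have hppos : (0:ℝ) < p := by positivity
  rcases eq_or_lt_of_le hLf0 with hLf | hLf
  · -- degenerate case Lf = 0
    obtain ⟨Φ, hΦZ, hΦ⟩ := hH (Matrix.of fun _ _ => (1:ℝ))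
      (by ext i j; rfl) (fun i j => zero_le_one)
    refine ⟨Φ, hΦZ, fun i j => ?_⟩
    have hzero : Λ ^ p * Lf ^ p * ∑ i, ∑ j, (1:ℝ) * dist (x i) (x j) ^ p = 0 := by
      rw [← hLf, Real.zero_rpow hp0]; ring
    have hle : ∑ i, ∑ j, (1:ℝ) * dist (Φ i) (Φ j) ^ p ≤ 0 := by
      calc ∑ i, ∑ j, (1:ℝ) * dist (Φ i) (Φ j) ^ p ≤ _ := hΦ
      _ = 0 := hzero
    have hterm : (1:ℝ) * dist (Φ i) (Φ j) ^ p ≤ ∑ i, ∑ j, (1:ℝ) * dist (Φ i) (Φ j) ^ p := by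
      have h1 : ∀ i, (0:ℝ) ≤ ∑ j, (1:ℝ) * dist (Φ i) (Φ j) ^ p := fun i =>
        Finset.sum_nonneg fun j _ => by positivity
      calc (1:ℝ) * dist (Φ i) (Φ j) ^ p
          ≤ ∑ j', (1:ℝ) * dist (Φ i) (Φ j') ^ p :=
            Finset.single_le_sum (f := fun j' => (1:ℝ) * dist (Φ i) (Φ j') ^ p)
              (fun j' _ => by positivity) (Finset.mem_univ j)
        _ ≤ ∑ i', ∑ j', (1:ℝ) * dist (Φ i') (Φ j') ^ p :=
            Finset.single_le_sum (f := fun i' => ∑ j', (1:ℝ) * dist (Φ i') (Φ j') ^ p)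
              (fun i' _ => h1 i') (Finset.mem_univ i)
    have hdp : dist (Φ i) (Φ j) ^ p ≤ 0 := by linarith
    have hd0 : dist (Φ i) (Φ j) = 0 := by
      by_contra hne
      have : 0 < dist (Φ i) (Φ j) := lt_of_le_of_ne dist_nonneg (Ne.symm hne)
      exact absurd hdp (not_le.2 (Real.rpow_pos_of_pos this p))
    rw [hd0, ← hLf]
    simp
  · -- main case Lf > 0
    set K : ℝ := (1 + ε) * Λ * Lf with hKdef
    have hK0 : 0 < K := by positivity
    set cM : Fin n → Fin n → ℝ := fun a b => (K * dist (x a) (x b)) ^ p with hcMdef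
    set S : Set (Fin n → Fin n → ℝ) :=
      {D | ∃ Φ : Fin n → Y, (∀ (i : Fin n) (h : x i ∈ Z), Φ i = f ⟨x i, h⟩) ∧
        D = fun i j => dist (Φ i) (Φ j) ^ p} with hSdef
    set B : Set (Fin n → Fin n → ℝ) := {v | ∀ i j, i ≠ j → v i j < cM i j} with hBdef
    have hBopen : IsOpen B := by
      have : B = ⋂ (i) (j) (_ : i ≠ j), {v : Fin n → Fin n → ℝ | v i j < cM i j} := by
        ext v; simp [hBdef, Set.mem_iInter]
      rw [this]
      refine isOpen_iInter_of_finite fun i => isOpen_iInter_of_finite fun j =>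
        isOpen_iInter_of_finite fun _ => ?_
      exact isOpen_lt ((continuous_apply j).comp (continuous_apply i)) continuous_const
    have hBconv : Convex ℝ B := by
      have : B = ⋂ (i) (j) (_ : i ≠ j), {v : Fin n → Fin n → ℝ | v i j < cM i j} := by
        ext v; simp [hBdef, Set.mem_iInter]
      rw [this]
      refine convex_iInter fun i => convex_iInter fun j => convex_iInter fun _ => ?_
      exact convex_halfSpace_lt ⟨fun a b => rfl, fun c a => rfl⟩ _
    have key : ¬ Disjoint B (convexHull ℝ S) := by
      intro hdis
      obtain ⟨φ, u, hBlt, hCge⟩ :=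
        geometric_hahn_banach_open hBconv hBopen (convex_convexHull ℝ S) hdis
      set bas : Fin n → Fin n → (Fin n → Fin n → ℝ) :=
        fun i j => Pi.single i (Pi.single j 1) with hbasdef
      have hbasval : ∀ i j a b, bas i j a b = if a = i ∧ b = j then 1 else 0 := by
        intro i j a b
        simp only [hbasdef]
        by_cases h1 : a = i <;> by_cases h2 : b = j <;>
          simp [h1, h2, Pi.single_apply]
      set h : Fin n → Fin n → ℝ := fun i j => φ (bas i j) with hhdef
      have hrepr : ∀ v : Fin n → Fin n → ℝ, v = ∑ i, ∑ j, v i j • bas i j := by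
        intro v; funext a b
        simp only [Finset.sum_apply, Pi.smul_apply, smul_eq_mul, hbasval, mul_ite, mul_one,
          mul_zero, ite_and]
        rw [Finset.sum_comm]
        simp
      have hdecomp : ∀ v : Fin n → Fin n → ℝ, φ v = ∑ i, ∑ j, h i j * v i j := by
        intro v
        conv_lhs => rw [hrepr v]
        rw [map_sum]
        refine Finset.sum_congr rfl fun i _ => ?_
        rw [map_sum]
        refine Finset.sum_congr rfl fun j _ => ?_
        rw [map_smul, smul_eq_mul, mul_comm]
      set v₀ : Fin n → Fin n → ℝ := fun a b => cM a b - 1 with hv₀def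
      have hv₀B : v₀ ∈ B := fun i j _ => by
        simp only [hv₀def]; linarith
      have hv₀lt : φ v₀ < u := hBlt v₀ hv₀B
      have hdiag : ∀ i, h i i = 0 := by
        intro i
        by_contra hne
        have mem : ∀ t : ℝ, v₀ + t • bas i i ∈ B := by
          intro t a b hab
          have hb0 : bas i i a b = 0 := by
            rw [hbasval]
            simp only [ite_eq_right_iff, one_ne_zero]
            rintro ⟨rfl, rfl⟩; exact hab rfl
          have : (v₀ + t • bas i i) a b = v₀ a b := by
            simp [hb0]
          rw [this]; exact hv₀B a b hab
        have hlt : ∀ t : ℝ, φ v₀ + t * h i i < u := by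
          intro t
          have h2 := hBlt _ (mem t)
          rw [map_add, map_smul, smul_eq_mul] at h2
          exact h2
        have := hlt ((u - φ v₀) / h i i)
        rw [div_mul_cancel₀ _ hne] at this
        linarith
      have hoff : ∀ i j, i ≠ j → 0 ≤ h i j := by
        intro i j hij
        by_contra hneg
        push_neg at hneg
        set t : ℝ := (u - φ v₀) / (-h i j) with htdef
        have ht : 0 < t := div_pos (by linarith) (by linarith)
        have mem : v₀ - t • bas i j ∈ B := by
          intro a b hab
          have hbnn : 0 ≤ bas i j a b := by rw [hbasval]; split <;> norm_num
          have : (v₀ - t • bas i j) a b ≤ v₀ a b := by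
            simp only [Pi.sub_apply, Pi.smul_apply, smul_eq_mul]
            nlinarith
          exact lt_of_le_of_lt this (hv₀B a b hab)
        have hlt := hBlt _ mem
        rw [map_sub, map_smul, smul_eq_mul] at hlt
        have hne2 : -h i j ≠ 0 := by intro hcon; rw [neg_eq_zero] at hcon; linarith
        have heq : t * φ (bas i j) = -(u - φ v₀) := by
          show t * h i j = -(u - φ v₀)
          rw [htdef, div_mul_eq_mul_div, div_eq_iff hne2]
          ring
        rw [heq] at hlt
        linarith
      have hcle : φ cM ≤ u := by
        by_contra hgt
        push_neg at hgt
        set o : Fin n → Fin n → ℝ := fun _ _ => 1 with hodef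
        set δ : ℝ := (φ cM - u) / (1 + |φ o|) with hδdef
        have hδpos : 0 < δ := div_pos (by linarith) (by positivity)
        have mem : cM - δ • o ∈ B := by
          intro a b hab
          simp only [Pi.sub_apply, Pi.smul_apply, smul_eq_mul, hodef, mul_one]
          linarith
        have hlt := hBlt _ mem
        rw [map_sub, map_smul, smul_eq_mul] at hlt
        have h1 : δ * φ o ≤ δ * (1 + |φ o|) := by
          have := le_abs_self (φ o)
          nlinarith
        have h2 : δ * (1 + |φ o|) = φ cM - u := by
          rw [hδdef]; field_simp
        linarith
      -- apply the hypothesis to the symmetrized matrix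
      set H : Matrix (Fin n) (Fin n) ℝ := Matrix.of (fun i j => h i j + h j i) with hHdef
      have hsymm : H.IsSymm := by
        ext i j
        simp only [hHdef, Matrix.transpose_apply, Matrix.of_apply]
        ring
      have hnn : ∀ i j, 0 ≤ H i j := by
        intro i j
        simp only [hHdef, Matrix.of_apply]
        rcases eq_or_ne i j with rfl | hij
        · rw [hdiag i]; norm_num
        · exact add_nonneg (hoff i j hij) (hoff j i (Ne.symm hij))
      have hsym_sum : ∀ g : Fin n → Fin n → ℝ, (∀ i j, g i j = g j i) →
          ∑ i, ∑ j, H i j * g i j = 2 * ∑ i, ∑ j, h i j * g i j := by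
        intro g hg
        have hswap : ∑ i, ∑ j, h j i * g i j = ∑ i, ∑ j, h i j * g i j := by
          rw [Finset.sum_comm]
          exact Finset.sum_congr rfl fun i _ => Finset.sum_congr rfl fun j _ => by rw [hg]
        calc ∑ i, ∑ j, H i j * g i j
            = ∑ i, ∑ j, (h i j * g i j + h j i * g i j) := by
              refine Finset.sum_congr rfl fun i _ => Finset.sum_congr rfl fun j _ => ?_
              simp only [hHdef, Matrix.of_apply]; ring
          _ = (∑ i, ∑ j, h i j * g i j) + ∑ i, ∑ j, h j i * g i j := by
              rw [← Finset.sum_add_distrib]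
              exact Finset.sum_congr rfl fun i _ => Finset.sum_add_distrib
          _ = 2 * ∑ i, ∑ j, h i j * g i j := by rw [hswap]; ring
      obtain ⟨Φ, hΦZ, hΦ⟩ := hH H hsymm hnn
      set a : ℝ := ∑ i, ∑ j, h i j * dist (Φ i) (Φ j) ^ p with hadef
      set b : ℝ := ∑ i, ∑ j, h i j * dist (x i) (x j) ^ p with hbdef
      have e1 : ∑ i, ∑ j, H i j * dist (Φ i) (Φ j) ^ p = 2 * a :=
        hsym_sum _ (fun i j => by rw [dist_comm])
      have e2 : ∑ i, ∑ j, H i j * dist (x i) (x j) ^ p = 2 * b :=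
        hsym_sum _ (fun i j => by rw [dist_comm])
      have hab : a ≤ Λ ^ p * Lf ^ p * b := by
        have h1 := hΦ
        rw [e1, e2] at h1
        have h2 : Λ ^ p * Lf ^ p * (2 * b) = 2 * (Λ ^ p * Lf ^ p * b) := by ring
        rw [h2] at h1
        linarith
      have hDΦS : (fun i j => dist (Φ i) (Φ j) ^ p) ∈ S := ⟨Φ, hΦZ, rfl⟩
      have hua : u ≤ a := by
        have h3 := hCge _ (subset_convexHull ℝ S hDΦS)
        have h4 : φ (fun i j => dist (Φ i) (Φ j) ^ p) = a := hdecomp _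
        rwa [h4] at h3
      have hcMb : φ cM = K ^ p * b := by
        have h4 : φ cM = ∑ i, ∑ j, h i j * (K * dist (x i) (x j)) ^ p := hdecomp _
        rw [h4, hbdef, Finset.mul_sum]
        refine Finset.sum_congr rfl fun i _ => ?_
        rw [Finset.mul_sum]
        refine Finset.sum_congr rfl fun j _ => ?_
        rw [Real.mul_rpow hK0.le dist_nonneg]
        ring
      have hbnn : 0 ≤ b := by
        refine Finset.sum_nonneg fun i _ => Finset.sum_nonneg fun j _ => ?_
        rcases eq_or_ne i j with rfl | hij
        · rw [dist_self, Real.zero_rpow hp0, mul_zero]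
        · exact mul_nonneg (hoff i j hij) (Real.rpow_nonneg dist_nonneg p)
      have hKp : K ^ p = (1 + ε) ^ p * (Λ ^ p * Lf ^ p) := by
        rw [hKdef, Real.mul_rpow (by positivity) hLf.le,
          Real.mul_rpow (by positivity) (by positivity)]
        ring
      have hone_lt : 1 < (1 + ε) ^ p :=
        Real.one_lt_rpow_iff_of_pos (by linarith) |>.2 (Or.inl ⟨by linarith, hppos⟩)
      have hΛLf : 0 < Λ ^ p * Lf ^ p :=
        mul_pos (Real.rpow_pos_of_pos (by linarith) p) (Real.rpow_pos_of_pos hLf p)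
      -- chain: K^p b = φ cM ≤ u ≤ a ≤ Λ^p Lf^p b
      have hchain : (1 + ε) ^ p * (Λ ^ p * Lf ^ p) * b ≤ Λ ^ p * Lf ^ p * b := by
        rw [← hKp, ← hcMb]; linarith
      have hble : b ≤ 0 := by
        by_contra hbp
        push_neg at hbp
        have h5 : 0 < Λ ^ p * Lf ^ p * b := mul_pos hΛLf hbp
        nlinarith [hchain]
      have hb0 : b = 0 := le_antisymm hble hbnn
      have hoff0 : ∀ i j, i ≠ j → h i j = 0 := by
        intro i j hij
        have hterms : ∀ i' j', 0 ≤ h i' j' * dist (x i') (x j') ^ p := by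
          intro i' j'
          rcases eq_or_ne i' j' with rfl | hij'
          · rw [dist_self, Real.zero_rpow hp0, mul_zero]
          · exact mul_nonneg (hoff i' j' hij') (Real.rpow_nonneg dist_nonneg p)
        have hinner : ∑ j', h i j' * dist (x i) (x j') ^ p = 0 := by
          have := (Finset.sum_eq_zero_iff_of_nonneg
            (fun i' _ => Finset.sum_nonneg fun j' _ => hterms i' j')).1 hb0 i (Finset.mem_univ i)
          exact this
        have hterm0 : h i j * dist (x i) (x j) ^ p = 0 :=
          (Finset.sum_eq_zero_iff_of_nonneg (fun j' _ => hterms i j')).1 hinner j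
            (Finset.mem_univ j)
        have hdpos : 0 < dist (x i) (x j) ^ p := by
          refine Real.rpow_pos_of_pos ?_ p
          rw [dist_pos]
          exact fun hxx => hij (hx hxx)
        exact (mul_eq_zero.1 hterm0).resolve_right (ne_of_gt hdpos)
      have ha0 : a = 0 := by
        refine Finset.sum_eq_zero fun i _ => Finset.sum_eq_zero fun j _ => ?_
        rcases eq_or_ne i j with rfl | hij
        · rw [dist_self, Real.zero_rpow hp0, mul_zero]
        · rw [hoff0 i j hij, zero_mul]
      have hv₀0 : φ v₀ = 0 := by
        have h4 : φ v₀ = ∑ i, ∑ j, h i j * v₀ i j := hdecomp _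
        rw [h4]
        refine Finset.sum_eq_zero fun i _ => Finset.sum_eq_zero fun j _ => ?_
        rcases eq_or_ne i j with rfl | hij
        · rw [hdiag i, zero_mul]
        · rw [hoff0 i j hij, zero_mul]
      rw [hv₀0] at hv₀lt
      rw [ha0] at hua
      linarith
    -- extract a good convex combination
    obtain ⟨D, hDB, hDC⟩ := Set.not_disjoint_iff.1 key
    rw [convexHull_eq] at hDC
    obtain ⟨ι, t, w, z, hw0, hw1, hzS, hcm⟩ := hDC
    choose Φs hΦsZ hΦseq using fun k : {k // k ∈ t} => hzS k.1 k.2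
    have hw0' : ∀ k : {k // k ∈ t}, 0 ≤ w k.1 := fun k => hw0 k.1 k.2
    have hsum1 : ∑ k : {k // k ∈ t}, w k.1 = 1 := by
      rw [Finset.sum_coe_sort t (fun k => w k)]; exact hw1
    have hDval : ∀ i j, D i j = ∑ k : {k // k ∈ t}, w k.1 * dist (Φs k i) (Φs k j) ^ p := by
      intro i j
      rw [← hcm, Finset.centerMass_eq_of_sum_1 _ _ hw1]
      rw [Finset.sum_apply, Finset.sum_apply]
      rw [← Finset.sum_coe_sort t (fun k => (w k • z k) i j)]
      refine Finset.sum_congr rfl fun k _ => ?_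
      rw [hΦseq k]
      simp
    refine ⟨fun i => bary (FinProb.mix (fun k : {k // k ∈ t} => w k.1)
      (fun k => Φs k i) hw0' hsum1), ?_, ?_⟩
    · intro i hi
      show bary (FinProb.mix (fun k : {k // k ∈ t} => w k.1)
        (fun k => Φs k i) hw0' hsum1) = f ⟨x i, hi⟩
      rw [FinProb.mix_const_eq_dirac _ _ _ _ (f ⟨x i, hi⟩) (fun k => hΦsZ k i hi)]
      exact hW.1 (f ⟨x i, hi⟩)
    · intro i j
      rcases eq_or_ne i j with rfl | hij
      · rw [dist_self]
        have : (1 + ε) * Γ * Λ * Lf * dist (x i) (x i) = 0 := by rw [dist_self]; ring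
        rw [this]
      · have hWd := hW.2 (FinProb.mix (fun k : {k // k ∈ t} => w k.1)
          (fun k => Φs k i) hw0' hsum1) (FinProb.mix (fun k : {k // k ∈ t} => w k.1)
          (fun k => Φs k j) hw0' hsum1)
        have hwass := wasserstein_mix_le p hp (fun k : {k // k ∈ t} => w k.1) hw0' hsum1
          (fun k => Φs k i) (fun k => Φs k j)
        have hEnn : 0 ≤ ∑ k : {k // k ∈ t}, w k.1 * dist (Φs k i) (Φs k j) ^ p :=
          Finset.sum_nonneg fun k _ =>
            mul_nonneg (hw0' k) (Real.rpow_nonneg dist_nonneg p)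
        have hElt : ∑ k : {k // k ∈ t}, w k.1 * dist (Φs k i) (Φs k j) ^ p ≤ cM i j := by
          rw [← hDval i j]; exact (hDB i j hij).le
        have hrpow : (∑ k : {k // k ∈ t}, w k.1 * dist (Φs k i) (Φs k j) ^ p) ^ p⁻¹ ≤
            (cM i j) ^ p⁻¹ :=
          Real.rpow_le_rpow hEnn hElt (by positivity)
        have hcMval : (cM i j) ^ p⁻¹ = K * dist (x i) (x j) := by
          rw [hcMdef]
          exact Real.rpow_rpow_inv (by positivity) hp0
        have hfinal : dist (bary (FinProb.mix (fun k : {k // k ∈ t} => w k.1)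
            (fun k => Φs k i) hw0' hsum1)) (bary (FinProb.mix (fun k : {k // k ∈ t} => w k.1)
            (fun k => Φs k j) hw0' hsum1)) ≤ Γ * (K * dist (x i) (x j)) := by
          calc _ ≤ Γ * wassersteinDist p _ _ := hWd
            _ ≤ Γ * ((∑ k : {k // k ∈ t}, w k.1 * dist (Φs k i) (Φs k j) ^ p) ^ p⁻¹) := by
                apply mul_le_mul_of_nonneg_left hwass (by linarith)
            _ ≤ Γ * ((cM i j) ^ p⁻¹) := mul_le_mul_of_nonneg_left hrpow (by linarith)
            _ = Γ * (K * dist (x i) (x j)) := by rw [hcMval]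
        calc _ ≤ Γ * (K * dist (x i) (x j)) := hfinal
          _ = (1 + ε) * Γ * Λ * Lf * dist (x i) (x j) := by rw [hKdef]; ring

end
end

section
/- For every p ∈ (0,2), the real line ℝ equipped with the standard metric d(x,y) = |x−y| fails to have metric Markov cotype p. That is, for every N ∈ (0,∞) there exist n,t ∈ ℕ, a symmetric stochastic matrix A = (a_{ij}) ∈ M_n(ℝ), and x_1,…,x_n ∈ ℝ such that for all y_1,…,y_n ∈ ℝ the inequality (1/n) Σ_i |x_i−y_i|^p + (t/n) Σ_{i,j} a_{ij} |y_i−y_j|^p ≤ (N^p/n) Σ_{i,j} 𝒜_t(A)_{ij} |x_i−x_j|^p fails. -/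
open scoped BigOperators ENNReal
open scoped Classical

noncomputable section

namespace MMCAux

open Fin.NatCast

/-- The simple random walk matrix on the cycle `Fin n`. -/
def W (n : ℕ) [NeZero n] : Matrix (Fin n) (Fin n) ℝ :=
  Matrix.of fun i j => if j = i + 1 ∨ j = i - 1 then (1:ℝ)/2 else 0

/-- The sawtooth embedding of the cycle into `ℝ`. -/
def xv (n : ℕ) : Fin n → ℝ := fun i => ((min i.val (n - i.val) : ℕ) : ℝ)

lemma add_ne_sub {n : ℕ} [NeZero n] (hn : 4 ≤ n) (i : Fin n) : i + 1 ≠ i - 1 := by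
  intro h2
  have h3 : (1 : Fin n) = -1 := by
    rw [sub_eq_add_neg] at h2; exact add_left_cancel h2
  have h4 : ((2:ℕ) : Fin n) = 0 := by open Fin.CommRing in (push_cast; linear_combination h3)
  have h5 := Fin.val_cast_of_lt (n := n) (a := 2) (by omega)
  rw [h4] at h5
  simp at h5

lemma W_row {n : ℕ} [NeZero n] (hn : 4 ≤ n) (i : Fin n) (g : Fin n → ℝ) :
    ∑ j, W n i j * g j = (g (i+1) + g (i-1)) / 2 := by
  have hne : (i+1) ≠ (i-1) := add_ne_sub hn i
  have key : ∀ j, W n i j * g j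
      = (if j = i+1 then g j / 2 else 0) + (if j = i-1 then g j / 2 else 0) := by
    intro j
    simp only [W, Matrix.of_apply]
    by_cases h1 : j = i+1
    · subst h1
      rw [if_pos (Or.inl rfl), if_pos rfl, if_neg hne]
      ring
    · by_cases h2 : j = i-1
      · subst h2
        rw [if_pos (Or.inr rfl), if_neg h1, if_pos rfl]
        ring
      · rw [if_neg (by tauto), if_neg h1, if_neg h2]
        ring
  rw [Finset.sum_congr rfl (fun j _ => key j), Finset.sum_add_distrib,
    Finset.sum_ite_eq' Finset.univ (i+1) (fun j => g j / 2),
    Finset.sum_ite_eq' Finset.univ (i-1) (fun j => g j / 2)]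
  simp only [Finset.mem_univ, if_pos]
  ring

lemma W_stoch {n : ℕ} [NeZero n] (hn : 4 ≤ n) : IsStochastic (W n) := by
  constructor
  · intro i j
    simp only [W, Matrix.of_apply]
    split <;> norm_num
  · intro i
    have := W_row hn i (fun _ => (1:ℝ))
    simpa using this

lemma W_symm {n : ℕ} [NeZero n] : (W n).IsSymm := by
  apply Matrix.IsSymm.ext
  intro i j
  simp only [W, Matrix.of_apply]
  apply if_congr _ rfl rfl
  constructor
  · rintro (rfl | rfl)
    · right; rw [add_sub_cancel_right]
    · left; rw [sub_add_cancel]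
  · rintro (rfl | rfl)
    · right; rw [add_sub_cancel_right]
    · left; rw [sub_add_cancel]

lemma stoch_mul {n : ℕ} {A B : Matrix (Fin n) (Fin n) ℝ}
    (hA : IsStochastic A) (hB : IsStochastic B) : IsStochastic (A * B) := by
  constructor
  · intro i j
    rw [Matrix.mul_apply]
    exact Finset.sum_nonneg fun k _ => mul_nonneg (hA.1 i k) (hB.1 k j)
  · intro i
    simp_rw [Matrix.mul_apply]
    rw [Finset.sum_comm]
    simp_rw [← Finset.mul_sum, hB.2, mul_one]
    exact hA.2 i

lemma stoch_one {n : ℕ} : IsStochastic (1 : Matrix (Fin n) (Fin n) ℝ) := by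
  constructor
  · intro i j
    rw [Matrix.one_apply]
    split <;> norm_num
  · intro i
    simp [Matrix.one_apply]

lemma stoch_pow {n : ℕ} {A : Matrix (Fin n) (Fin n) ℝ} (hA : IsStochastic A) (s : ℕ) :
    IsStochastic (A ^ s) := by
  induction s with
  | zero => simpa [pow_zero] using stoch_one
  | succ s ih => rw [pow_succ]; exact stoch_mul ih hA

set_option maxHeartbeats 1000000 in
lemma natkey (m a n : ℕ) (h : n = 2*m) (ha : a < n) (h2 : 2 ≤ m) :
    (min ((a+1)%n) (n - (a+1)%n) = min a (n-a) + 1 ∧ min a (n-a) = min ((a+(n-1))%n) (n-(a+(n-1))%n) + 1)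
    ∨ (min ((a+1)%n) (n-(a+1)%n) + 1 = min a (n-a) ∧ min ((a+(n-1))%n) (n-(a+(n-1))%n) = min a (n-a) + 1)
    ∨ (min a (n-a) = 0 ∧ min ((a+1)%n) (n-(a+1)%n) = 1 ∧ min ((a+(n-1))%n) (n-(a+(n-1))%n) = 1)
    ∨ (min a (n-a) = m ∧ min ((a+1)%n) (n-(a+1)%n) + 1 = m ∧ min ((a+(n-1))%n) (n-(a+(n-1))%n) + 1 = m) := by
  subst h
  rcases Nat.eq_or_lt_of_le (Nat.succ_le_of_lt ha) with h1 | h1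
  · have e1 : (a+1) % (2*m) = 0 := by rw [show a+1 = 2*m by omega, Nat.mod_self]
    have e2 : (a + (2*m-1)) % (2*m) = a - 1 := by
      rw [show a + (2*m-1) = (a-1) + 1*(2*m) by omega, Nat.add_mul_mod_self_right]
      exact Nat.mod_eq_of_lt (by omega)
    rw [e1, e2]; omega
  · have e1 : (a+1) % (2*m) = a+1 := Nat.mod_eq_of_lt (by omega)
    rcases Nat.eq_zero_or_pos a with rfl | hpos
    · have e2 : (0 + (2*m-1)) % (2*m) = 2*m-1 := by
        rw [Nat.zero_add]; exact Nat.mod_eq_of_lt (by omega)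
      rw [e1, e2]; omega
    · have e2 : (a + (2*m-1)) % (2*m) = a - 1 := by
        rw [show a + (2*m-1) = (a-1) + 1*(2*m) by omega, Nat.add_mul_mod_self_right]
        exact Nat.mod_eq_of_lt (by omega)
      rw [e1, e2]; omega

lemma nbr {m : ℕ} [NeZero (2*m)] (hm : 2 ≤ m) (k : Fin (2*m)) (a : ℝ)
    (ha0 : 0 ≤ a) (ham : a ≤ (m:ℝ)) :
    ((a - xv (2*m) (k+1))^2 + (a - xv (2*m) (k-1))^2) / 2 ≤ (a - xv (2*m) k)^2 + 1 := by
  have h1m : 1 < 2*m := by omega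
  have v1 : ((k+1 : Fin (2*m))).val = (k.val + 1) % (2*m) := by
    rw [Fin.add_def]
    simp [Fin.val_one', Nat.mod_eq_of_lt h1m]
  have v2 : ((k-1 : Fin (2*m))).val = (k.val + (2*m - 1)) % (2*m) := by
    rw [Fin.sub_def]
    simp only [Fin.val_one', Nat.mod_eq_of_lt h1m]
    rw [Nat.add_comm]
  have hkey := natkey m k.val (2*m) rfl k.isLt hm
  simp only [xv, v1, v2]
  set u : ℕ := min ((k.val+1)%(2*m)) (2*m - (k.val+1)%(2*m)) with hu
  set v : ℕ := min ((k.val+(2*m-1))%(2*m)) (2*m - (k.val+(2*m-1))%(2*m)) with hv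
  set w : ℕ := min k.val (2*m - k.val) with hw
  rcases hkey with ⟨e1, e2⟩ | ⟨e1, e2⟩ | ⟨e0, e1, e2⟩ | ⟨e0, e1, e2⟩
  · have c1 : (u:ℝ) = (w:ℝ) + 1 := by exact_mod_cast congrArg (Nat.cast (R := ℝ)) e1
    have c2 : (w:ℝ) = (v:ℝ) + 1 := by exact_mod_cast congrArg (Nat.cast (R := ℝ)) e2
    nlinarith [sq_nonneg (a - (w:ℝ))]
  · have c1 : (u:ℝ) + 1 = (w:ℝ) := by exact_mod_cast congrArg (Nat.cast (R := ℝ)) e1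
    have c2 : (v:ℝ) = (w:ℝ) + 1 := by exact_mod_cast congrArg (Nat.cast (R := ℝ)) e2
    nlinarith [sq_nonneg (a - (w:ℝ))]
  · have c0 : (w:ℝ) = 0 := by exact_mod_cast congrArg (Nat.cast (R := ℝ)) e0
    have c1 : (u:ℝ) = 1 := by exact_mod_cast congrArg (Nat.cast (R := ℝ)) e1
    have c2 : (v:ℝ) = 1 := by exact_mod_cast congrArg (Nat.cast (R := ℝ)) e2
    rw [c0, c1, c2]
    nlinarith [ha0]
  · have c0 : (w:ℝ) = (m:ℝ) := by exact_mod_cast congrArg (Nat.cast (R := ℝ)) e0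
    have c1 : (u:ℝ) + 1 = (m:ℝ) := by exact_mod_cast congrArg (Nat.cast (R := ℝ)) e1
    have c2 : (v:ℝ) + 1 = (m:ℝ) := by exact_mod_cast congrArg (Nat.cast (R := ℝ)) e2
    nlinarith [ham]

lemma xv_nonneg {n : ℕ} (i : Fin n) : 0 ≤ xv n i := Nat.cast_nonneg _

lemma xv_le {m : ℕ} (i : Fin (2*m)) : xv (2*m) i ≤ (m:ℝ) := by
  have : min i.val (2*m - i.val) ≤ m := by omega
  simp only [xv]
  exact_mod_cast this

lemma onestep {m : ℕ} [NeZero (2*m)] (hm : 2 ≤ m) (i k : Fin (2*m)) :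
    ∑ j, W (2*m) k j * (xv (2*m) i - xv (2*m) j)^2 ≤ (xv (2*m) i - xv (2*m) k)^2 + 1 := by
  rw [W_row (by omega) k (fun j => (xv (2*m) i - xv (2*m) j)^2)]
  exact nbr hm k (xv (2*m) i) (xv_nonneg i) (xv_le i)

lemma moment {m : ℕ} [NeZero (2*m)] (hm : 2 ≤ m) (i : Fin (2*m)) (s : ℕ) :
    ∑ j, (W (2*m) ^ s) i j * (xv (2*m) i - xv (2*m) j)^2 ≤ (s : ℝ) := by
  induction s with
  | zero =>
    rw [pow_zero]
    have : ∀ j, (1 : Matrix (Fin (2*m)) (Fin (2*m)) ℝ) i j * (xv (2*m) i - xv (2*m) j)^2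
        = if i = j then (xv (2*m) i - xv (2*m) j)^2 else 0 := by
      intro j; rw [Matrix.one_apply]; split <;> simp
    rw [Finset.sum_congr rfl (fun j _ => this j), Finset.sum_ite_eq Finset.univ i]
    simp
  | succ s ih =>
    have hstoc := stoch_pow (W_stoch (n := 2*m) (by omega)) s
    rw [pow_succ]
    have expand : ∑ j, (W (2*m) ^ s * W (2*m)) i j * (xv (2*m) i - xv (2*m) j)^2
        = ∑ k, (W (2*m) ^ s) i k * (∑ j, W (2*m) k j * (xv (2*m) i - xv (2*m) j)^2) := by
      simp_rw [Matrix.mul_apply, Finset.sum_mul, Finset.mul_sum]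
      rw [Finset.sum_comm]
      apply Finset.sum_congr rfl; intro k _
      apply Finset.sum_congr rfl; intro j _
      ring
    rw [expand]
    calc ∑ k, (W (2*m) ^ s) i k * (∑ j, W (2*m) k j * (xv (2*m) i - xv (2*m) j)^2)
        ≤ ∑ k, (W (2*m) ^ s) i k * ((xv (2*m) i - xv (2*m) k)^2 + 1) := by
          apply Finset.sum_le_sum; intro k _
          exact mul_le_mul_of_nonneg_left (onestep hm i k) (hstoc.1 i k)
      _ = (∑ k, (W (2*m) ^ s) i k * (xv (2*m) i - xv (2*m) k)^2) + ∑ k, (W (2*m) ^ s) i k := by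
          rw [← Finset.sum_add_distrib]
          apply Finset.sum_congr rfl; intro k _; ring
      _ ≤ (s:ℝ) + 1 := by rw [hstoc.2 i]; linarith [ih]
      _ = ((s+1 : ℕ) : ℝ) := by push_cast; ring

lemma ptwise {p : ℝ} (hp0 : 0 < p) (hp2 : p < 2) {T : ℝ} (hT : 1 ≤ T) (d : ℝ) :
    |d| ^ p ≤ T ^ (p/2) + T ^ (p/2 - 1) * d^2 := by
  have hT0 : (0:ℝ) < T := by linarith
  have hroot : (0:ℝ) < T ^ ((1:ℝ)/2) := Real.rpow_pos_of_pos hT0 _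
  have hsecond : 0 ≤ T ^ (p/2 - 1) * d^2 :=
    mul_nonneg (Real.rpow_nonneg hT0.le _) (sq_nonneg d)
  rcases le_or_gt |d| (T ^ ((1:ℝ)/2)) with h | h
  · have h1 : |d| ^ p ≤ (T ^ ((1:ℝ)/2)) ^ p := Real.rpow_le_rpow (abs_nonneg d) h hp0.le
    have h2 : (T ^ ((1:ℝ)/2)) ^ p = T ^ (p/2) := by
      rw [← Real.rpow_mul hT0.le]; ring_nf
    linarith [h1, h2 ▸ h1]
  · have hd0 : 0 < |d| := lt_trans hroot h
    have e1 : |d| ^ p = |d| ^ (p - 2) * d^2 := by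
      rw [show d^2 = |d| ^ ((2:ℕ) : ℝ) by rw [Real.rpow_natCast, sq_abs]]
      rw [← Real.rpow_add hd0]
      norm_num
    have e2 : |d| ^ (p-2) ≤ (T ^ ((1:ℝ)/2)) ^ (p-2) :=
      Real.rpow_le_rpow_of_nonpos hroot h.le (by linarith)
    have e3 : (T ^ ((1:ℝ)/2)) ^ (p-2) = T ^ (p/2 - 1) := by
      rw [← Real.rpow_mul hT0.le]; ring_nf
    have e4 : |d| ^ (p-2) * d^2 ≤ T ^ (p/2 - 1) * d^2 := by
      apply mul_le_mul_of_nonneg_right _ (sq_nonneg d)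
      rw [← e3]; exact e2
    have h5 : (0:ℝ) ≤ T ^ (p/2) := Real.rpow_nonneg hT0.le _
    linarith [e1 ▸ e4]

lemma row_p {m : ℕ} [NeZero (2*m)] (hm : 2 ≤ m) {p : ℝ} (hp0 : 0 < p) (hp2 : p < 2)
    {T : ℝ} (hT : 1 ≤ T) (s : ℕ) (hs : (s:ℝ) ≤ T) (i : Fin (2*m)) :
    ∑ j, (W (2*m) ^ s) i j * |xv (2*m) i - xv (2*m) j| ^ p ≤ 2 * T ^ (p/2) := by
  have hstoc := stoch_pow (W_stoch (n := 2*m) (by omega)) s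
  have hT0 : (0:ℝ) < T := by linarith
  calc ∑ j, (W (2*m) ^ s) i j * |xv (2*m) i - xv (2*m) j| ^ p
      ≤ ∑ j, (W (2*m) ^ s) i j * (T ^ (p/2) + T ^ (p/2 - 1) * (xv (2*m) i - xv (2*m) j)^2) := by
        apply Finset.sum_le_sum; intro j _
        exact mul_le_mul_of_nonneg_left (ptwise hp0 hp2 hT _) (hstoc.1 i j)
    _ = T ^ (p/2) * (∑ j, (W (2*m) ^ s) i j)
        + T ^ (p/2 - 1) * (∑ j, (W (2*m) ^ s) i j * (xv (2*m) i - xv (2*m) j)^2) := by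
        rw [Finset.mul_sum, Finset.mul_sum, ← Finset.sum_add_distrib]
        apply Finset.sum_congr rfl; intro j _; ring
    _ ≤ T ^ (p/2) * 1 + T ^ (p/2 - 1) * T := by
        rw [hstoc.2 i]
        have h1 : T ^ (p/2 - 1) * (∑ j, (W (2*m) ^ s) i j * (xv (2*m) i - xv (2*m) j)^2)
            ≤ T ^ (p/2 - 1) * T :=
          mul_le_mul_of_nonneg_left (le_trans (moment hm i s) hs) (Real.rpow_nonneg hT0.le _)
        linarith
    _ = 2 * T ^ (p/2) := by
        rw [mul_one]
        have : T ^ (p/2 - 1) * T = T ^ (p/2) := by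
          nth_rewrite 2 [show T = T ^ (1:ℝ) by rw [Real.rpow_one]]
          rw [← Real.rpow_add hT0]; ring_nf
        rw [this]; ring

lemma cesaro_row {m : ℕ} [NeZero (2*m)] (hm : 2 ≤ m) {p : ℝ} (hp0 : 0 < p) (hp2 : p < 2)
    {t : ℕ} (ht : 1 ≤ t) (i : Fin (2*m)) :
    ∑ j, cesaro (W (2*m)) t i j * |xv (2*m) i - xv (2*m) j| ^ p ≤ 2 * (t:ℝ) ^ (p/2) := by
  have hT : (1:ℝ) ≤ (t:ℝ) := by exact_mod_cast ht
  have hT0 : (0:ℝ) < (t:ℝ) := by linarith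
  have entry : ∀ j, cesaro (W (2*m)) t i j = (t:ℝ)⁻¹ * ∑ s ∈ Finset.Icc 1 t, (W (2*m) ^ s) i j := by
    intro j
    simp [cesaro, Matrix.smul_apply, Matrix.sum_apply]
  calc ∑ j, cesaro (W (2*m)) t i j * |xv (2*m) i - xv (2*m) j| ^ p
      = ∑ j, ∑ s ∈ Finset.Icc 1 t, (t:ℝ)⁻¹ * ((W (2*m) ^ s) i j * |xv (2*m) i - xv (2*m) j| ^ p) := by
        apply Finset.sum_congr rfl; intro j _
        rw [entry j, mul_assoc, Finset.sum_mul, Finset.mul_sum]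
    _ = (t:ℝ)⁻¹ * ∑ s ∈ Finset.Icc 1 t, ∑ j, (W (2*m) ^ s) i j * |xv (2*m) i - xv (2*m) j| ^ p := by
        rw [Finset.sum_comm, Finset.mul_sum]
        apply Finset.sum_congr rfl; intro s _
        rw [Finset.mul_sum]
    _ ≤ (t:ℝ)⁻¹ * ∑ s ∈ Finset.Icc 1 t, 2 * (t:ℝ) ^ (p/2) := by
        apply mul_le_mul_of_nonneg_left _ (by positivity)
        apply Finset.sum_le_sum; intro s hs
        have hsle : (s:ℝ) ≤ (t:ℝ) := by
          exact_mod_cast (Finset.mem_Icc.mp hs).2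
        exact row_p hm hp0 hp2 hT s hsle i
    _ = 2 * (t:ℝ) ^ (p/2) := by
        rw [Finset.sum_const, Nat.card_Icc]
        simp only [nsmul_eq_mul]
        have : (t + 1 - 1 : ℕ) = t := by omega
        rw [this]
        field_simp



lemma edge_sum {n : ℕ} [NeZero n] (hn : 4 ≤ n) (p : ℝ) (y : Fin n → ℝ) :
    ∑ i, ∑ j, W n i j * |y i - y j| ^ p = ∑ i, |y (i+1) - y i| ^ p := by
  have hrow : ∀ i : Fin n, ∑ j, W n i j * |y i - y j| ^ p
      = (|y (i+1) - y i| ^ p + |y i - y (i-1)| ^ p) / 2 := by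
    intro i
    rw [W_row hn i (fun j => |y i - y j| ^ p)]
    rw [abs_sub_comm (y i) (y (i+1))]
  have hB : ∑ i : Fin n, |y (i+1) - y i| ^ p = ∑ i : Fin n, |y i - y (i-1)| ^ p := by
    apply Fintype.sum_equiv (Equiv.addRight (1 : Fin n))
      (fun i => |y (i+1) - y i| ^ p) (fun i => |y i - y (i-1)| ^ p)
    intro i
    simp only [Equiv.coe_addRight]
    rw [add_sub_cancel_right]
  rw [Finset.sum_congr rfl (fun i _ => hrow i)]
  rw [← Finset.sum_div, Finset.sum_add_distrib, ← hB]
  ring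

lemma tele {n : ℕ} [NeZero n] (y : Fin n → ℝ) (i j : Fin n) :
    |y i - y j| ≤ ∑ k, |y (k+1) - y k| := by
  have main : ∀ K : ℕ, ∀ i : Fin n,
      |y (i + (K : Fin n)) - y i| ≤ ∑ l ∈ Finset.range K, |y ((i + (l : Fin n)) + 1) - y (i + (l : Fin n))| := by
    intro K
    induction K with
    | zero => intro i; simp
    | succ K ih =>
      intro i
      have h1 : (((K:ℕ)+1 : ℕ) : Fin n) = (K : Fin n) + 1 := by push_cast; ring
      have h2 := abs_sub_le (y (i + ((K+1 : ℕ) : Fin n))) (y (i + (K : Fin n))) (y i)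
      rw [Finset.sum_range_succ]
      have h3 : i + ((K+1 : ℕ) : Fin n) = (i + (K : Fin n)) + 1 := by
        rw [h1, add_assoc]
      rw [h3]
      have := ih i
      linarith [this, h2, h3 ▸ h2]
  have himg : ∀ (b : Fin n) (K : ℕ), K ≤ n →
      ∑ l ∈ Finset.range K, |y ((b + (l : Fin n)) + 1) - y (b + (l : Fin n))|
        ≤ ∑ k, |y (k+1) - y k| := by
    intro b K hK
    have inj : ∀ a₁ ∈ Finset.range K, ∀ a₂ ∈ Finset.range K,
        b + ((a₁ : ℕ) : Fin n) = b + ((a₂ : ℕ) : Fin n) → a₁ = a₂ := by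
      intro a₁ h₁ a₂ h₂ h
      have h' := add_left_cancel h
      have v₁ := Fin.val_cast_of_lt (n := n) (a := a₁) (by
        have := Finset.mem_range.mp h₁; omega)
      have v₂ := Fin.val_cast_of_lt (n := n) (a := a₂) (by
        have := Finset.mem_range.mp h₂; omega)
      rw [← v₁, ← v₂, h']
    calc ∑ l ∈ Finset.range K, |y ((b + (l : Fin n)) + 1) - y (b + (l : Fin n))|
        = ∑ x ∈ (Finset.range K).image (fun l : ℕ => b + (l : Fin n)), |y (x+1) - y x| := by
          rw [Finset.sum_image inj]
      _ ≤ ∑ k, |y (k+1) - y k| := by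
          apply Finset.sum_le_sum_of_subset_of_nonneg (Finset.subset_univ _)
          intro k _ _
          exact abs_nonneg _
  have hrep : j + (((i - j).val : ℕ) : Fin n) = i := by
    rw [Fin.cast_val_eq_self, add_comm, sub_add_cancel]
  calc |y i - y j| = |y (j + (((i - j).val : ℕ) : Fin n)) - y j| := by rw [hrep]
    _ ≤ ∑ l ∈ Finset.range (i - j).val, |y ((j + (l : Fin n)) + 1) - y (j + (l : Fin n))| :=
        main (i - j).val j
    _ ≤ ∑ k, |y (k+1) - y k| := himg j (i - j).val (le_of_lt (i - j).isLt)

lemma rpow_add_le {p : ℝ} (hp0 : 0 < p) (hp1 : p ≤ 1) (a b : ℝ) (ha : 0 ≤ a) (hb : 0 ≤ b) :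
    (a + b) ^ p ≤ a ^ p + b ^ p := by
  lift a to NNReal using ha
  lift b to NNReal using hb
  have := NNReal.rpow_add_le_add_rpow a b hp0.le hp1
  exact_mod_cast this

lemma rpow_sum_le {p : ℝ} (hp0 : 0 < p) (hp1 : p ≤ 1) {ι : Type*} (s : Finset ι)
    (f : ι → ℝ) (hf : ∀ i, 0 ≤ f i) : (∑ i ∈ s, f i) ^ p ≤ ∑ i ∈ s, f i ^ p := by
  induction s using Finset.cons_induction with
  | empty => simp [Real.zero_rpow hp0.ne']
  | cons a s ha ih =>
    rw [Finset.sum_cons, Finset.sum_cons]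
    have h1 := rpow_add_le hp0 hp1 (f a) (∑ i ∈ s, f i) (hf a)
      (Finset.sum_nonneg fun i _ => hf i)
    linarith [ih]

lemma sum_rpow_ge {p : ℝ} (hp1 : 1 ≤ p) {n : ℕ} (hn : 0 < n) (f : Fin n → ℝ)
    (hf : ∀ i, 0 ≤ f i) : (∑ i, f i) ^ p ≤ (n:ℝ) ^ (p - 1) * ∑ i, f i ^ p := by
  have hn0 : (0:ℝ) < n := by exact_mod_cast hn
  have h := Real.rpow_arith_mean_le_arith_mean_rpow Finset.univ (fun _ : Fin n => (n:ℝ)⁻¹) f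
    (fun i _ => by positivity) (by
      rw [Finset.sum_const, Finset.card_univ, Fintype.card_fin, nsmul_eq_mul]
      field_simp) (fun i _ => hf i) hp1
  simp only [← Finset.mul_sum] at h
  rw [Real.mul_rpow (by positivity) (Finset.sum_nonneg fun i _ => hf i)] at h
  have key : ((n:ℝ))^p * ((n:ℝ)⁻¹)^p = 1 := by
    rw [← Real.mul_rpow hn0.le (by positivity), mul_inv_cancel₀ hn0.ne', Real.one_rpow]
  calc (∑ i, f i)^p = (n:ℝ)^p * (((n:ℝ)⁻¹)^p * (∑ i, f i)^p) := by
        rw [← mul_assoc, key, one_mul]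
    _ ≤ (n:ℝ)^p * ((n:ℝ)⁻¹ * ∑ i, f i ^ p) := by
        apply mul_le_mul_of_nonneg_left h (Real.rpow_nonneg hn0.le _)
    _ = (n:ℝ)^(p-1) * ∑ i, f i ^ p := by
        rw [← mul_assoc]
        congr 1
        rw [show (n:ℝ)⁻¹ = (n:ℝ)^(-1:ℝ) by rw [Real.rpow_neg_one], ← Real.rpow_add hn0]
        ring_nf

lemma xterm {m : ℕ} [NeZero (2*m)] (hm : 2 ≤ m) {p : ℝ} (hp0 : 0 < p)
    (y : Fin (2*m) → ℝ)
    (hTV : ∑ k, |y (k+1) - y k| ≤ (m:ℝ)/8) :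
    ((m:ℝ)/4) * ((m:ℝ)/8) ^ p ≤ ∑ i, |xv (2*m) i - y i| ^ p := by
  set K := m/4 + 1 with hK
  have hm8 : (0:ℝ) ≤ (m:ℝ)/8 := by positivity
  have haK : ∀ a ∈ Finset.range K, a ≤ m/4 := by
    intro a ha; have := Finset.mem_range.mp ha; omega
  have hva : ∀ a ∈ Finset.range K, ((a : ℕ) : Fin (2*m)).val = a := by
    intro a ha
    exact Fin.val_cast_of_lt (by have := haK a ha; omega)
  have hvb : ∀ a ∈ Finset.range K, (((m - a : ℕ)) : Fin (2*m)).val = m - a := by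
    intro a ha
    exact Fin.val_cast_of_lt (by have := haK a ha; omega)
  have hxa : ∀ a ∈ Finset.range K, xv (2*m) ((a : ℕ) : Fin (2*m)) = (a:ℝ) := by
    intro a ha
    have h1 := haK a ha
    simp only [xv, hva a ha]
    have : min a (2*m - a) = a := by omega
    rw [this]
  have hxb : ∀ a ∈ Finset.range K, xv (2*m) (((m - a : ℕ)) : Fin (2*m)) = (m:ℝ) - (a:ℝ) := by
    intro a ha
    have h1 := haK a ha
    simp only [xv, hvb a ha]
    have : min (m - a) (2*m - (m - a)) = m - a := by omega
    rw [this]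
    have : (a:ℕ) ≤ m := by omega
    push_cast [Nat.cast_sub this]
    ring
  have pairb : ∀ a ∈ Finset.range K,
      ((m:ℝ)/8) ^ p ≤ |xv (2*m) ((a : ℕ) : Fin (2*m)) - y ((a : ℕ) : Fin (2*m))| ^ p
        + |xv (2*m) (((m - a : ℕ)) : Fin (2*m)) - y (((m - a : ℕ)) : Fin (2*m))| ^ p := by
    intro a ha
    set ia : Fin (2*m) := ((a : ℕ) : Fin (2*m))
    set ja : Fin (2*m) := (((m - a : ℕ)) : Fin (2*m))
    have h4a : 4*a ≤ m := by have := haK a ha; omega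
    have h4a' : (a:ℝ) ≤ (m:ℝ)/4 := by
      have : (4*a : ℕ) ≤ (m:ℕ) := h4a
      have := (Nat.cast_le (α := ℝ)).mpr this
      push_cast at this
      linarith
    have hm0 : (0:ℝ) < m := by
      have : (0:ℕ) < m := by omega
      exact_mod_cast this
    have key : (m:ℝ)/8 ≤ |xv (2*m) ia - y ia| ∨ (m:ℝ)/8 ≤ |xv (2*m) ja - y ja| := by
      by_contra hcon
      push_neg at hcon
      obtain ⟨hc1, hc2⟩ := hcon
      have htel := tele y ia ja
      have htri : |xv (2*m) ia - xv (2*m) ja|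
          ≤ |xv (2*m) ia - y ia| + |y ia - y ja| + |y ja - xv (2*m) ja| := by
        have t1 := abs_sub_le (xv (2*m) ia) (y ia) (xv (2*m) ja)
        have t2 := abs_sub_le (y ia) (y ja) (xv (2*m) ja)
        linarith
      have hval : |xv (2*m) ia - xv (2*m) ja| = (m:ℝ) - 2*a := by
        rw [hxa a ha, hxb a ha]
        rw [abs_of_nonpos (by linarith)]
        ring
      have hc2' : |y ja - xv (2*m) ja| < (m:ℝ)/8 := by
        rw [abs_sub_comm]; exact hc2
      linarith [htel, htri, hval ▸ htri]
    rcases key with h | h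
    · have h1 : ((m:ℝ)/8) ^ p ≤ |xv (2*m) ia - y ia| ^ p :=
        Real.rpow_le_rpow hm8 h hp0.le
      have h2 : (0:ℝ) ≤ |xv (2*m) ja - y ja| ^ p := Real.rpow_nonneg (abs_nonneg _) _
      linarith
    · have h1 : ((m:ℝ)/8) ^ p ≤ |xv (2*m) ja - y ja| ^ p :=
        Real.rpow_le_rpow hm8 h hp0.le
      have h2 : (0:ℝ) ≤ |xv (2*m) ia - y ia| ^ p := Real.rpow_nonneg (abs_nonneg _) _
      linarith
  set f : Fin (2*m) → ℝ := fun i => |xv (2*m) i - y i| ^ p with hf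
  have hf0 : ∀ i, 0 ≤ f i := fun i => Real.rpow_nonneg (abs_nonneg _) p
  have inj1 : ∀ a₁ ∈ Finset.range K, ∀ a₂ ∈ Finset.range K,
      ((a₁ : ℕ) : Fin (2*m)) = ((a₂ : ℕ) : Fin (2*m)) → a₁ = a₂ := by
    intro a₁ h₁ a₂ h₂ h
    have := congrArg Fin.val h
    rw [hva a₁ h₁, hva a₂ h₂] at this
    exact this
  have inj2 : ∀ a₁ ∈ Finset.range K, ∀ a₂ ∈ Finset.range K,
      (((m - a₁ : ℕ)) : Fin (2*m)) = (((m - a₂ : ℕ)) : Fin (2*m)) → a₁ = a₂ := by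
    intro a₁ h₁ a₂ h₂ h
    have := congrArg Fin.val h
    rw [hvb a₁ h₁, hvb a₂ h₂] at this
    have k₁ := haK a₁ h₁; have k₂ := haK a₂ h₂
    omega
  set S1 := (Finset.range K).image (fun a : ℕ => ((a : ℕ) : Fin (2*m))) with hS1
  set S2 := (Finset.range K).image (fun a : ℕ => (((m - a : ℕ)) : Fin (2*m))) with hS2
  have hdisj : Disjoint S1 S2 := by
    rw [Finset.disjoint_left]
    intro x hx1 hx2
    obtain ⟨a, haa, rfl⟩ := Finset.mem_image.mp hx1
    obtain ⟨b, hbb, hab⟩ := Finset.mem_image.mp hx2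
    have := congrArg Fin.val hab
    rw [hvb b hbb, hva a haa] at this
    have k₁ := haK a haa; have k₂ := haK b hbb
    omega
  have hK4 : (m:ℝ)/4 ≤ (K:ℝ) := by
    have h1 : m ≤ 4*K := by omega
    have h2 : (m:ℝ) ≤ ((4*K:ℕ):ℝ) := Nat.cast_le.mpr h1
    rw [Nat.cast_mul] at h2
    have h3 : ((4:ℕ):ℝ) = 4 := by norm_num
    rw [h3] at h2
    linarith
  calc ((m:ℝ)/4) * ((m:ℝ)/8)^p ≤ (K:ℝ) * ((m:ℝ)/8)^p :=
        mul_le_mul_of_nonneg_right hK4 (Real.rpow_nonneg hm8 _)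
    _ = ∑ _a ∈ Finset.range K, ((m:ℝ)/8)^p := by
        rw [Finset.sum_const, Finset.card_range, nsmul_eq_mul]
    _ ≤ ∑ a ∈ Finset.range K, (f ((a : ℕ) : Fin (2*m)) + f (((m - a : ℕ)) : Fin (2*m))) :=
        Finset.sum_le_sum pairb
    _ = ∑ a ∈ Finset.range K, f ((a : ℕ) : Fin (2*m))
        + ∑ a ∈ Finset.range K, f (((m - a : ℕ)) : Fin (2*m)) := Finset.sum_add_distrib
    _ = ∑ x ∈ S1, f x + ∑ x ∈ S2, f x := by
        rw [Finset.sum_image inj1, Finset.sum_image inj2]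
    _ = ∑ x ∈ S1 ∪ S2, f x := (Finset.sum_union hdisj).symm
    _ ≤ ∑ i, f i :=
        Finset.sum_le_sum_of_subset_of_nonneg (Finset.subset_univ _) (fun i _ _ => hf0 i)

lemma rhs_total {m : ℕ} [NeZero (2*m)] (hm : 2 ≤ m) {p : ℝ} (hp0 : 0 < p) (hp2 : p < 2)
    {t : ℕ} (ht : 1 ≤ t) :
    ∑ i, ∑ j, cesaro (W (2*m)) t i j * |xv (2*m) i - xv (2*m) j| ^ p
      ≤ ((2*m : ℕ):ℝ) * (2 * (t:ℝ) ^ (p/2)) := by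
  calc ∑ i, ∑ j, cesaro (W (2*m)) t i j * |xv (2*m) i - xv (2*m) j| ^ p
      ≤ ∑ _i : Fin (2*m), 2 * (t:ℝ) ^ (p/2) :=
        Finset.sum_le_sum (fun i _ => cesaro_row hm hp0 hp2 ht i)
    _ = ((2*m : ℕ):ℝ) * (2 * (t:ℝ) ^ (p/2)) := by
        rw [Finset.sum_const, Finset.card_univ, Fintype.card_fin, nsmul_eq_mul]

lemma lhs_total {m : ℕ} [NeZero (2*m)] (hm : 2 ≤ m) {p : ℝ} (hp0 : 0 < p) (hp2 : p < 2)
    {t : ℕ} (hge : ((2*m:ℕ):ℝ) ^ (max 1 p) ≤ (t:ℝ)) (y : Fin (2*m) → ℝ) :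
    (1/8) * ((m:ℝ)/8) ^ p ≤
      ((2*m:ℕ):ℝ)⁻¹ * ∑ i, |xv (2*m) i - y i| ^ p
      + ((t:ℝ)/((2*m:ℕ):ℝ)) * ∑ i, ∑ j, W (2*m) i j * |y i - y j| ^ p := by
  have hnR : (0:ℝ) < ((2*m:ℕ):ℝ) := by
    have : 0 < 2*m := by omega
    exact_mod_cast this
  have ht0 : (0:ℝ) ≤ (t:ℝ) := Nat.cast_nonneg _
  have hm8 : (0:ℝ) ≤ (m:ℝ)/8 := by positivity
  have hx0 : (0:ℝ) ≤ ∑ i, |xv (2*m) i - y i| ^ p :=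
    Finset.sum_nonneg fun i _ => Real.rpow_nonneg (abs_nonneg _) _
  rw [edge_sum (by omega) p y]
  have hc0 : (0:ℝ) ≤ ∑ k, |y (k+1) - y k| ^ p :=
    Finset.sum_nonneg fun k _ => Real.rpow_nonneg (abs_nonneg _) _
  have hS0 : (0:ℝ) ≤ ∑ k, |y (k+1) - y k| :=
    Finset.sum_nonneg fun k _ => abs_nonneg _
  have hp8 : (0:ℝ) ≤ ((m:ℝ)/8) ^ p := Real.rpow_nonneg hm8 _
  rcases le_or_gt ((m:ℝ)/8) (∑ k, |y (k+1) - y k|) with hcase | hcase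
  · -- large total variation: edge term dominates
    have hsump : ((m:ℝ)/8)^p ≤ ((t:ℝ)/((2*m:ℕ):ℝ)) * ∑ k, |y (k+1) - y k| ^ p := by
      rcases le_or_gt p 1 with hp1 | hp1
      · have h1 : ((m:ℝ)/8)^p ≤ (∑ k, |y (k+1) - y k|)^p :=
          Real.rpow_le_rpow hm8 hcase hp0.le
        have h2 : (∑ k, |y (k+1) - y k|)^p ≤ ∑ k, |y (k+1) - y k| ^ p :=
          rpow_sum_le hp0 hp1 Finset.univ _ (fun k => abs_nonneg _)
        have h3 : (1:ℝ) ≤ (t:ℝ)/((2*m:ℕ):ℝ) := by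
          rw [le_div_iff₀ hnR, one_mul]
          calc ((2*m:ℕ):ℝ) = ((2*m:ℕ):ℝ) ^ (1:ℝ) := (Real.rpow_one _).symm
            _ = ((2*m:ℕ):ℝ) ^ (max 1 p) := by rw [max_eq_left hp1]
            _ ≤ (t:ℝ) := hge
        calc ((m:ℝ)/8)^p ≤ ∑ k, |y (k+1) - y k| ^ p := le_trans h1 h2
          _ = 1 * ∑ k, |y (k+1) - y k| ^ p := (one_mul _).symm
          _ ≤ ((t:ℝ)/((2*m:ℕ):ℝ)) * ∑ k, |y (k+1) - y k| ^ p :=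
              mul_le_mul_of_nonneg_right h3 hc0
      · have h1 : ((m:ℝ)/8)^p ≤ (∑ k, |y (k+1) - y k|)^p :=
          Real.rpow_le_rpow hm8 hcase hp0.le
        have h2 := sum_rpow_ge hp1.le (n := 2*m) (by omega)
          (fun k => |y (k+1) - y k|) (fun k => abs_nonneg _)
        have h3 : ((2*m:ℕ):ℝ)^(p-1) * ∑ k, |y (k+1) - y k| ^ p
            ≤ ((t:ℝ)/((2*m:ℕ):ℝ)) * ∑ k, |y (k+1) - y k| ^ p := by
          apply mul_le_mul_of_nonneg_right _ hc0
          rw [le_div_iff₀ hnR]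
          calc ((2*m:ℕ):ℝ)^(p-1) * ((2*m:ℕ):ℝ)
              = ((2*m:ℕ):ℝ)^(p-1) * ((2*m:ℕ):ℝ)^(1:ℝ) := by rw [Real.rpow_one]
            _ = ((2*m:ℕ):ℝ)^p := by rw [← Real.rpow_add hnR]; ring_nf
            _ = ((2*m:ℕ):ℝ)^(max 1 p) := by rw [max_eq_right hp1.le]
            _ ≤ (t:ℝ) := hge
        calc ((m:ℝ)/8)^p ≤ (∑ k, |y (k+1) - y k|)^p := h1
          _ ≤ ((2*m:ℕ):ℝ)^(p-1) * ∑ k, |y (k+1) - y k| ^ p := h2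
          _ ≤ _ := h3
    have hfirst : (0:ℝ) ≤ ((2*m:ℕ):ℝ)⁻¹ * ∑ i, |xv (2*m) i - y i| ^ p :=
      mul_nonneg (by positivity) hx0
    linarith
  · -- small total variation: the x-distance term dominates
    have hx := xterm hm hp0 y hcase.le
    have h1 : (1/8) * ((m:ℝ)/8)^p ≤ ((2*m:ℕ):ℝ)⁻¹ * ∑ i, |xv (2*m) i - y i| ^ p := by
      have h2 : ((2*m:ℕ):ℝ)⁻¹ * ((m:ℝ)/4 * ((m:ℝ)/8)^p)
          ≤ ((2*m:ℕ):ℝ)⁻¹ * ∑ i, |xv (2*m) i - y i| ^ p :=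
        mul_le_mul_of_nonneg_left hx (by positivity)
      have h3 : ((2*m:ℕ):ℝ)⁻¹ * ((m:ℝ)/4 * ((m:ℝ)/8)^p) = (1/8) * ((m:ℝ)/8)^p := by
        have hm0 : (m:ℝ) ≠ 0 := by
          have : 0 < m := by omega
          exact_mod_cast this.ne'
        have : ((2*m:ℕ):ℝ) = 2*(m:ℝ) := by push_cast; ring
        rw [this]
        field_simp
        ring
      linarith [h3 ▸ h2]
    have hsecond : (0:ℝ) ≤ ((t:ℝ)/((2*m:ℕ):ℝ)) * ∑ k, |y (k+1) - y k| ^ p :=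
      mul_nonneg (by positivity) hc0
    linarith

end MMCAux



theorem statement19 (p : ℝ) (hp0 : 0 < p) (hp2 : p < 2) (N : ℝ) (hN : 0 < N) :
    ∃ (n t : ℕ), 0 < n ∧ 0 < t ∧
      ∃ A : Matrix (Fin n) (Fin n) ℝ, IsStochastic A ∧ A.IsSymm ∧
        ∃ x : Fin n → ℝ, ∀ y : Fin n → ℝ,
          ¬((n : ℝ)⁻¹ * ∑ i, |x i - y i| ^ p +
              ((t : ℝ) / (n : ℝ)) * ∑ i, ∑ j, A i j * |y i - y j| ^ p ≤
            N ^ p / (n : ℝ) * ∑ i, ∑ j, cesaro A t i j * |x i - x j| ^ p) := by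
  set q := max 1 p with hqdef
  have hq1 : 1 ≤ q := le_max_left _ _
  have hq2 : q < 2 := max_lt (by norm_num) hp2
  have hq0 : 0 ≤ q := by linarith
  have h2q : 0 < 2 - q := by linarith
  have hdpos : 0 < p * (2 - q) / 2 := by positivity
  set δ := p * (2 - q) / 2 with hddef
  have hC : (0:ℝ) < 32 * 16 ^ p * N ^ p := by positivity
  set C := 32 * 16 ^ p * N ^ p with hCdef
  obtain ⟨M, hM⟩ := exists_nat_gt (max 2 (C ^ (1/δ)))
  have hm2 : 2 ≤ M := by
    have h2 : (2:ℝ) ≤ (M:ℝ) := (lt_of_le_of_lt (le_max_left _ _) hM).le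
    exact_mod_cast h2
  haveI : NeZero (2*M) := ⟨by omega⟩
  have hn4 : 4 ≤ 2*M := by omega
  have hnR : (0:ℝ) < ((2*M:ℕ):ℝ) := by
    have : 0 < 2*M := by omega
    exact_mod_cast this
  have hnR1 : (1:ℝ) ≤ ((2*M:ℕ):ℝ) := by
    have : 1 ≤ 2*M := by omega
    exact_mod_cast this
  set t := ⌈((2*M:ℕ):ℝ) ^ q⌉₊ with htdef
  have hnq1 : (1:ℝ) ≤ ((2*M:ℕ):ℝ) ^ q := by
    calc (1:ℝ) = ((2*M:ℕ):ℝ) ^ (0:ℝ) := (Real.rpow_zero _).symm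
      _ ≤ ((2*M:ℕ):ℝ) ^ q := Real.rpow_le_rpow_of_exponent_le hnR1 hq0
  have htpos : 0 < t := Nat.ceil_pos.mpr (by positivity)
  have hT1 : ((2*M:ℕ):ℝ) ^ q ≤ (t:ℝ) := Nat.le_ceil _
  have hTle : (t:ℝ) ≤ 2 * ((2*M:ℕ):ℝ) ^ q := by
    have h := Nat.ceil_lt_add_one (show (0:ℝ) ≤ ((2*M:ℕ):ℝ) ^ q by positivity)
    have : (t:ℝ) < ((2*M:ℕ):ℝ) ^ q + 1 := h
    linarith
  refine ⟨2*M, t, by omega, htpos, MMCAux.W (2*M), MMCAux.W_stoch hn4, MMCAux.W_symm,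
    MMCAux.xv (2*M), ?_⟩
  intro y hle
  -- lower bound for the left-hand side
  have hlhs := MMCAux.lhs_total hm2 hp0 hp2 (t := t) hT1 y
  -- upper bound for the right-hand side
  have hrhs := MMCAux.rhs_total (t := t) hm2 hp0 hp2 htpos
  have hNp : (0:ℝ) < N ^ p := Real.rpow_pos_of_pos hN _
  have hrhs2 : N ^ p / ((2*M:ℕ):ℝ)
        * ∑ i, ∑ j, cesaro (MMCAux.W (2*M)) t i j * |MMCAux.xv (2*M) i - MMCAux.xv (2*M) j| ^ p
      ≤ 2 * N ^ p * (t:ℝ) ^ (p/2) := by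
    have h1 : N ^ p / ((2*M:ℕ):ℝ)
          * ∑ i, ∑ j, cesaro (MMCAux.W (2*M)) t i j * |MMCAux.xv (2*M) i - MMCAux.xv (2*M) j| ^ p
        ≤ N ^ p / ((2*M:ℕ):ℝ) * (((2*M:ℕ):ℝ) * (2 * (t:ℝ) ^ (p/2))) :=
      mul_le_mul_of_nonneg_left hrhs (by positivity)
    have h2 : N ^ p / ((2*M:ℕ):ℝ) * (((2*M:ℕ):ℝ) * (2 * (t:ℝ) ^ (p/2)))
        = 2 * N ^ p * (t:ℝ) ^ (p/2) := by
      field_simp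
    linarith [h2 ▸ h1]
  have hts : (t:ℝ)^(p/2) ≤ 2 * ((2*M:ℕ):ℝ) ^ (q*(p/2)) := by
    calc (t:ℝ)^(p/2) ≤ (2 * ((2*M:ℕ):ℝ) ^ q)^(p/2) :=
          Real.rpow_le_rpow (by positivity) hTle (by positivity)
      _ = 2^(p/2) * (((2*M:ℕ):ℝ) ^ q)^(p/2) := Real.mul_rpow (by norm_num) (by positivity)
      _ ≤ 2 * ((2*M:ℕ):ℝ) ^ (q*(p/2)) := by
          have h2' : (2:ℝ)^(p/2) ≤ 2 := by
            calc (2:ℝ)^(p/2) ≤ (2:ℝ)^(1:ℝ) :=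
                  Real.rpow_le_rpow_of_exponent_le one_le_two (by linarith)
              _ = 2 := Real.rpow_one 2
          have h3' : (((2*M:ℕ):ℝ) ^ q)^(p/2) = ((2*M:ℕ):ℝ) ^ (q*(p/2)) :=
            (Real.rpow_mul hnR.le q (p/2)).symm
          rw [h3']
          apply mul_le_mul_of_nonneg_right h2' (by positivity)
  -- final numeric comparison
  have hCn : C < ((2*M:ℕ):ℝ) ^ δ := by
    have h1 : C ^ (1/δ) < ((2*M:ℕ):ℝ) := by
      have hMn : (M:ℝ) ≤ ((2*M:ℕ):ℝ) := by
        have : M ≤ 2*M := by omega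
        exact_mod_cast this
      calc C ^ (1/δ) ≤ max 2 (C ^ (1/δ)) := le_max_right _ _
        _ < (M:ℝ) := hM
        _ ≤ ((2*M:ℕ):ℝ) := hMn
    have h2 : (C ^ (1/δ)) ^ δ < ((2*M:ℕ):ℝ) ^ δ :=
      Real.rpow_lt_rpow (Real.rpow_nonneg hC.le _) h1 hdpos
    have h3 : (C ^ (1/δ)) ^ δ = C := by
      rw [← Real.rpow_mul hC.le, one_div, inv_mul_cancel₀ hdpos.ne', Real.rpow_one]
    linarith [h3 ▸ h2]
  have hexp : ((2*M:ℕ):ℝ) ^ p = ((2*M:ℕ):ℝ) ^ δ * ((2*M:ℕ):ℝ) ^ (q*(p/2)) := by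
    rw [← Real.rpow_add hnR]
    congr 1
    rw [hddef]
    ring
  have hm8 : ((M:ℝ)/8) = ((2*M:ℕ):ℝ)/16 := by push_cast; ring
  have hm8p : ((M:ℝ)/8) ^ p = ((2*M:ℕ):ℝ)^p / 16^p := by
    rw [hm8, Real.div_rpow hnR.le (by norm_num)]
  have hqp2pos : (0:ℝ) < ((2*M:ℕ):ℝ) ^ (q*(p/2)) := Real.rpow_pos_of_pos hnR _
  have hfinal : 4 * N ^ p * ((2*M:ℕ):ℝ) ^ (q*(p/2)) < (1/8) * ((M:ℝ)/8) ^ p := by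
    rw [hm8p]
    rw [div_eq_mul_inv (((2*M:ℕ):ℝ)^p), hexp]
    have h16 : (0:ℝ) < 16 ^ p := Real.rpow_pos_of_pos (by norm_num) _
    rw [show (1:ℝ)/8 * (((2*M:ℕ):ℝ) ^ δ * ((2*M:ℕ):ℝ) ^ (q*(p/2)) * (16^p)⁻¹)
        = (((2*M:ℕ):ℝ) ^ δ / (8 * 16^p)) * ((2*M:ℕ):ℝ) ^ (q*(p/2)) by ring]
    apply mul_lt_mul_of_pos_right _ hqp2pos
    rw [lt_div_iff₀ (by positivity)]
    calc 4 * N ^ p * (8 * 16^p) = C * 1 := by rw [hCdef]; ring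
      _ = C := mul_one C
      _ < ((2*M:ℕ):ℝ) ^ δ := hCn
  -- put everything together
  have hchain : (1/8) * ((M:ℝ)/8) ^ p ≤ 4 * N ^ p * ((2*M:ℕ):ℝ) ^ (q*(p/2)) := by
    calc (1/8) * ((M:ℝ)/8) ^ p
        ≤ ((2*M:ℕ):ℝ)⁻¹ * ∑ i, |MMCAux.xv (2*M) i - y i| ^ p
          + ((t:ℝ)/((2*M:ℕ):ℝ)) * ∑ i, ∑ j, MMCAux.W (2*M) i j * |y i - y j| ^ p := hlhs
      _ ≤ N ^ p / ((2*M:ℕ):ℝ)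
          * ∑ i, ∑ j, cesaro (MMCAux.W (2*M)) t i j * |MMCAux.xv (2*M) i - MMCAux.xv (2*M) j| ^ p := hle
      _ ≤ 2 * N ^ p * (t:ℝ) ^ (p/2) := hrhs2
      _ ≤ 2 * N ^ p * (2 * ((2*M:ℕ):ℝ) ^ (q*(p/2))) := by
          apply mul_le_mul_of_nonneg_left hts (by positivity)
      _ = 4 * N ^ p * ((2*M:ℕ):ℝ) ^ (q*(p/2)) := by ring
  linarith


end
end
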